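/- arXiv:2312.07862 — 2 statements merged into one kernel-verified Lean document; each statement's English description precedes it below -/
import Mathlib

section
/- Lower bound in the joint+marginal lemma: suppose the map y ↦ T(y) is m-measurable (in particular this holds when the solution sets P*_y are nonempty for all y). Then every probability measure P on X×Y that is absolutely continuous with respect to λ⊗ν and has Y-marginal m satisfies ∫_{X×Y} l dP + ∫_{X×Y} |dP − dQ| ≥ ∫_Y T(y) m(dy). Consequently R ≥ ∫_Y T(y) m(dy). -/
open MeasureTheory
open ProbabilityTheory
open scoped ENNReal NNReal

noncomputable section

namespace DIMG

/-- `L¹` distance of the densities of two measures on `X` with respect to the reference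
measure `λ` (equal to twice the total variation distance when both are `≪ λ`):
`∫_X |dη/dλ − dη'/dλ| dλ`. -/
noncomputable def tvX {X : Type*} [MeasurableSpace X] (lam : Measure X)
    (η η' : Measure X) : ℝ :=
  ∫ x, |(η.rnDeriv lam x).toReal - (η'.rnDeriv lam x).toReal| ∂lam

/-- `L¹` distance of the densities of two measures on `X × Y` with respect to the reference
measure `λ⊗ν`: `∫_{X×Y} |dP − dP'|`. -/
noncomputable def tvJ {X Y : Type*} [MeasurableSpace X] [MeasurableSpace Y]
    (lam : Measure X) (ν : Measure Y) (P P' : Measure (X × Y)) : ℝ :=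
  ∫ p, |(P.rnDeriv (lam.prod ν) p).toReal - (P'.rnDeriv (lam.prod ν) p).toReal| ∂(lam.prod ν)

/-- The joint measure `P(dx,dy) = φ(dx|y) m(dy)` on `X × Y` built from a marginal `m` on `Y`
and a family of conditional laws `φ(·|y)` on `X`. -/
noncomputable def mixJoint {X Y : Type*} [MeasurableSpace X] [MeasurableSpace Y]
    (m : Measure Y) (φ : Y → Measure X) : Measure (X × Y) :=
  m.bind fun y => (φ y).map fun x => (x, y)

/-- The parametric ("interim") value
`T(y) := inf over η ∈ P(X), η ≪ λ of [∫_X l(x,y) η(dx) + ∫_X |dη/dλ − dψ(·|y)/dλ| dλ]`. -/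
noncomputable def Tval {X Y : Type*} [MeasurableSpace X] [MeasurableSpace Y]
    (lam : Measure X) (l : X → Y → ℝ) (ψ : Y → Measure X) (y : Y) : ℝ :=
  ⨅ η : {η : Measure X // IsProbabilityMeasure η ∧ η ≪ lam},
    (∫ x, l x y ∂(η : Measure X)) + tvX lam (η : Measure X) (ψ y)

/-- The joint ("ex ante") value
`R := inf over P ∈ P(X×Y), P ≪ λ⊗ν with Y-marginal m of [∫ l dP + ∫|dP − dQ|]`. -/
noncomputable def Rval {X Y : Type*} [MeasurableSpace X] [MeasurableSpace Y]
    (lam : Measure X) (ν : Measure Y) (l : X → Y → ℝ) (m : Measure Y)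
    (Q : Measure (X × Y)) : ℝ :=
  ⨅ P : {P : Measure (X × Y) //
      IsProbabilityMeasure P ∧ P ≪ lam.prod ν ∧ P.map Prod.snd = m},
    (∫ p, l p.1 p.2 ∂(P : Measure (X × Y))) + tvJ lam ν (P : Measure (X × Y)) Q

section Aux
variable {X Y : Type*} [MeasurableSpace X] [MeasurableSpace Y]

lemma measurable_mixKernelMap {ψ : Y → Measure X} (hψ : Measurable ψ)
    (hprob : ∀ y, IsProbabilityMeasure (ψ y)) :
    Measurable fun y => (ψ y).map fun x => (x, y) := by
  rw [Measure.measurable_measure]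
  intro s hs
  have h1 : ∀ y, ((ψ y).map fun x => (x, y)) s = ψ y {x | (x, y) ∈ s} := fun y => by
    rw [Measure.map_apply measurable_prodMk_right hs]; rfl
  simp_rw [h1]
  let κ : Kernel Y X := ⟨ψ, hψ⟩
  haveI : IsMarkovKernel κ := ⟨hprob⟩
  exact Kernel.measurable_kernel_prodMk_left (κ := κ) (measurable_swap hs)

lemma lintegral_mixJoint {m : Measure Y} {ψ : Y → Measure X} (hψ : Measurable ψ)
    (hprob : ∀ y, IsProbabilityMeasure (ψ y)) {H : X × Y → ℝ≥0∞} (hH : Measurable H) :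
    ∫⁻ p, H p ∂(mixJoint m ψ) = ∫⁻ y, ∫⁻ x, H (x, y) ∂ψ y ∂m := by
  rw [mixJoint, Measure.lintegral_bind (measurable_mixKernelMap hψ hprob).aemeasurable hH.aemeasurable]
  refine lintegral_congr fun y => ?_
  rw [lintegral_map hH measurable_prodMk_right]

lemma measurable_psi_lintegral {ψ : Y → Measure X} (hψ : Measurable ψ)
    (hprob : ∀ y, IsProbabilityMeasure (ψ y)) {H : X × Y → ℝ≥0∞} (hH : Measurable H) :
    Measurable fun y => ∫⁻ x, H (x, y) ∂ψ y := by
  let κ : Kernel Y X := ⟨ψ, hψ⟩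
  haveI : IsMarkovKernel κ := ⟨hprob⟩
  exact Measurable.lintegral_kernel_prod_right (κ := κ) (f := fun y x => H (x, y))
    (hH.comp measurable_swap)

lemma integral_eq_lintegral_ofReal_sub {α : Type*} [MeasurableSpace α] (ρ : Measure α)
    [IsProbabilityMeasure ρ] {h : α → ℝ} (hm : Measurable h) {C : ℝ} (hb : ∀ a, |h a| ≤ C) :
    ∫ a, h a ∂ρ = (∫⁻ a, ENNReal.ofReal (h a + C) ∂ρ).toReal - C := by
  have hint : Integrable h ρ :=
    Integrable.mono' (integrable_const C) hm.aestronglyMeasurable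
      (Filter.Eventually.of_forall hb)
  have h1 : ∫ a, (h a + C) ∂ρ = (∫⁻ a, ENNReal.ofReal (h a + C) ∂ρ).toReal := by
    rw [integral_eq_lintegral_of_nonneg_ae (f := fun a => h a + C)
      (Filter.Eventually.of_forall fun a => by
        simp only [Pi.zero_apply]; linarith [(abs_le.1 (hb a)).1])
      ((hm.add measurable_const).aestronglyMeasurable)]
  have h2 : ∫ a, (h a + C) ∂ρ = (∫ a, h a ∂ρ) + C := by
    rw [integral_add hint (integrable_const C), integral_const]; simp
  linarith

lemma abs_toReal_sub {a b : ℝ≥0∞} (ha : a ≠ ∞) (hb : b ≠ ∞) :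
    |a.toReal - b.toReal| = ((a - b) + (b - a)).toReal := by
  rcases le_total a b with h | h
  · rw [tsub_eq_zero_of_le h, zero_add, ENNReal.toReal_sub_of_le h hb, abs_sub_comm,
      abs_of_nonneg (sub_nonneg.2 (ENNReal.toReal_mono hb h))]
  · rw [tsub_eq_zero_of_le h, add_zero, ENNReal.toReal_sub_of_le h ha,
      abs_of_nonneg (sub_nonneg.2 (ENNReal.toReal_mono ha h))]

lemma map_snd_withDensity {lam : Measure X} {ν : Measure Y} [IsProbabilityMeasure lam]
    [IsProbabilityMeasure ν] {R : Measure (X × Y)} [IsFiniteMeasure R] (hR : R ≪ lam.prod ν) :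
    R.map Prod.snd = ν.withDensity fun y => ∫⁻ x, R.rnDeriv (lam.prod ν) (x, y) ∂lam := by
  have hf : Measurable (R.rnDeriv (lam.prod ν)) := Measure.measurable_rnDeriv _ _
  ext s hs
  rw [Measure.map_apply measurable_snd hs, withDensity_apply _ hs]
  conv_lhs => rw [← Measure.withDensity_rnDeriv_eq _ _ hR]
  rw [withDensity_apply _ (measurable_snd hs)]
  have h2 : Prod.snd ⁻¹' s = (Set.univ : Set X) ×ˢ s := by
    ext p; simp
  rw [Measure.restrict_congr_set (t := (Set.univ : Set X) ×ˢ s) (by rw [h2]; exact Filter.EventuallyEq.rfl), ← Measure.prod_restrict, Measure.restrict_univ,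
    lintegral_prod_symm' _ hf]
end Aux

/-- lower bound in the joint+marginal lemma: if `y ↦ T(y)` is measurable, then
every probability measure `P` on `X×Y` with `P ≪ λ⊗ν` and `Y`-marginal `m` satisfies
`∫ l dP + ∫|dP − dQ| ≥ ∫_Y T(y) m(dy)`; consequently `R ≥ ∫_Y T(y) m(dy)`. -/
theorem joint_marginal_lower_bound {X Y : Type*} [MeasurableSpace X] [MeasurableSpace Y]
    (lam : Measure X) (ν : Measure Y) [IsProbabilityMeasure lam] [IsProbabilityMeasure ν]
    (l : X → Y → ℝ) (hl_meas : Measurable fun p : X × Y => l p.1 p.2)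
    (hl_bdd : ∃ C : ℝ, ∀ x y, |l x y| ≤ C)
    (m : Measure Y) [IsProbabilityMeasure m]
    (Q : Measure (X × Y)) [IsProbabilityMeasure Q]
    (hQac : Q ≪ lam.prod ν) (hQm : Q.map Prod.snd = m)
    -- the disintegration `Q(dx,dy) = ψ(dx|y) m(dy)` of `Q` over its Y-marginal `m`
    (ψ : Y → Measure X) (hψ_meas : Measurable ψ)
    (hψ_prob : ∀ y, IsProbabilityMeasure (ψ y)) (hψ_ac : ∀ y, ψ y ≪ lam)
    (hdis : Q = mixJoint m ψ)
    (hT_meas : Measurable (Tval lam l ψ)) :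
    (∀ P : Measure (X × Y), IsProbabilityMeasure P → P ≪ lam.prod ν →
        P.map Prod.snd = m →
        (∫ y, Tval lam l ψ y ∂m) ≤ (∫ p, l p.1 p.2 ∂P) + tvJ lam ν P Q)
      ∧ (∫ y, Tval lam l ψ y ∂m) ≤ Rval lam ν l m Q := by
  classical
  obtain ⟨C, hC⟩ := hl_bdd
  have hXne : Nonempty X := by
    by_contra h
    have he : (Set.univ : Set X) = ∅ := by
      simp only [Set.eq_empty_iff_forall_notMem]
      exact fun x _ => h ⟨x⟩
    have := measure_univ (μ := lam)
    rw [he] at this; simp at this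
  have hYne : Nonempty Y := by
    by_contra h
    have he : (Set.univ : Set Y) = ∅ := by
      simp only [Set.eq_empty_iff_forall_notMem]
      exact fun y _ => h ⟨y⟩
    have := measure_univ (μ := ν)
    rw [he] at this; simp at this
  haveI : Nonempty {η : Measure X // IsProbabilityMeasure η ∧ η ≪ lam} :=
    ⟨⟨lam, inferInstance, Measure.AbsolutelyContinuous.rfl⟩⟩
  have hC0 : 0 ≤ C := by
    have y0 : Y := Classical.ofNonempty
    have x0 : X := Classical.ofNonempty
    exact le_trans (abs_nonneg _) (hC x0 y0)
  set μ : Measure (X × Y) := lam.prod ν with hμdef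
  have hq : Measurable (Q.rnDeriv μ) := Measure.measurable_rnDeriv _ _
  set q := Q.rnDeriv μ with hqdef
  set gq : Y → ℝ≥0∞ := fun y => ∫⁻ x, q (x, y) ∂lam with hgqdef
  have hgq_meas : Measurable gq := hq.lintegral_prod_left'
  have hm_q : m = ν.withDensity gq := by rw [← hQm]; exact map_snd_withDensity hQac
  set L : X × Y → ℝ≥0∞ := fun p => ENNReal.ofReal (l p.1 p.2 + C) with hLdef
  have hL_meas : Measurable L := (hl_meas.add measurable_const).ennreal_ofReal
  have hL_le : ∀ p, L p ≤ ENNReal.ofReal (2 * C) := fun p =>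
    ENNReal.ofReal_le_ofReal (by have := (abs_le.1 (hC p.1 p.2)).2; linarith)
  -- lower bound for elements of the infimum
  have hbound : ∀ (y : Y) (η : {η : Measure X // IsProbabilityMeasure η ∧ η ≪ lam}),
      -C ≤ (∫ x, l x y ∂(η : Measure X)) + tvX lam (η : Measure X) (ψ y) := by
    rintro y ⟨η, hηp, hηac⟩
    haveI := hηp
    have hint : Integrable (fun x => l x y) η :=
      Integrable.mono' (integrable_const C)
        ((hl_meas.comp measurable_prodMk_right).aestronglyMeasurable)
        (Filter.Eventually.of_forall fun x => hC x y)
    have h1 : -C ≤ ∫ x, l x y ∂η := by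
      have : (-C : ℝ) = ∫ _x, (-C : ℝ) ∂η := by simp
      rw [this]
      exact integral_mono (integrable_const _) hint fun x => neg_le_of_abs_le (hC x y)
    have h2 : 0 ≤ tvX lam η (ψ y) := integral_nonneg fun x => abs_nonneg _
    simp only []
    linarith
  have hT_bdd : ∀ y : Y, BddBelow (Set.range fun η :
      {η : Measure X // IsProbabilityMeasure η ∧ η ≪ lam} =>
      (∫ x, l x y ∂(η : Measure X)) + tvX lam (η : Measure X) (ψ y)) := by
    intro y
    refine ⟨-C, ?_⟩
    rintro z ⟨η, rfl⟩
    exact hbound y η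
  have hT_le : ∀ (y : Y) (η : Measure X) (hηp : IsProbabilityMeasure η) (hηac : η ≪ lam),
      Tval lam l ψ y ≤ (∫ x, l x y ∂η) + tvX lam η (ψ y) := by
    intro y η hηp hηac
    exact ciInf_le (hT_bdd y) ⟨η, hηp, hηac⟩
  have hT_lb : ∀ y, -C ≤ Tval lam l ψ y := fun y => le_ciInf (hbound y)
  have hT_ub : ∀ y, Tval lam l ψ y ≤ C := by
    intro y
    haveI := hψ_prob y
    refine le_trans (hT_le y (ψ y) (hψ_prob y) (hψ_ac y)) ?_
    have h1 : tvX lam (ψ y) (ψ y) = 0 := by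
      simp [tvX, sub_self, abs_zero]
    have hint : Integrable (fun x => l x y) (ψ y) :=
      Integrable.mono' (integrable_const C)
        ((hl_meas.comp measurable_prodMk_right).aestronglyMeasurable)
        (Filter.Eventually.of_forall fun x => hC x y)
    have h2 : ∫ x, l x y ∂ψ y ≤ C := by
      have : (C : ℝ) = ∫ _x, (C : ℝ) ∂ψ y := by simp
      rw [this]
      exact integral_mono hint (integrable_const _) fun x => le_of_abs_le (hC x y)
    linarith
  have hT_abs : ∀ y, |Tval lam l ψ y| ≤ C := fun y => abs_le.2 ⟨hT_lb y, hT_ub y⟩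
  -- the key disintegration identity
  have key : ∀ H : X × Y → ℝ≥0∞, Measurable H →
      ∫⁻ y, ∫⁻ x, H (x, y) ∂ψ y ∂m = ∫⁻ y, ∫⁻ x, H (x, y) * q (x, y) ∂lam ∂ν := by
    intro H hH
    have h1 : ∫⁻ p, H p ∂Q = ∫⁻ y, ∫⁻ x, H (x, y) ∂ψ y ∂m := by
      conv_lhs => rw [hdis]
      exact lintegral_mixJoint hψ_meas hψ_prob hH
    have h2 : ∫⁻ p, H p ∂Q = ∫⁻ y, ∫⁻ x, H (x, y) * q (x, y) ∂lam ∂ν := by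
      conv_lhs => rw [← Measure.withDensity_rnDeriv_eq _ _ hQac]
      rw [lintegral_withDensity_eq_lintegral_mul _ hq hH, hμdef]
      simp only [Pi.mul_apply]
      rw [lintegral_prod_symm' (fun z : X × Y => q z * H z) (hq.mul hH)]
      exact lintegral_congr fun y => lintegral_congr fun x => mul_comm _ _
    rw [← h1, h2]
  have tool : ∀ H : X × Y → ℝ≥0∞, Measurable H →
      ∀ᵐ y ∂ν, gq y * ∫⁻ x, H (x, y) ∂ψ y = ∫⁻ x, H (x, y) * q (x, y) ∂lam := by
    intro H hH
    have hK : Measurable fun y => ∫⁻ x, H (x, y) ∂ψ y :=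
      measurable_psi_lintegral hψ_meas hψ_prob hH
    have hG : Measurable fun y => ∫⁻ x, H (x, y) * q (x, y) ∂lam :=
      (hH.mul hq).lintegral_prod_left'
    refine ae_eq_of_forall_setLIntegral_eq_of_sigmaFinite (hgq_meas.mul hK) hG
      fun B hB _ => ?_
    have hHB : Measurable ((Prod.snd ⁻¹' B : Set (X × Y)).indicator H) :=
      hH.indicator (measurable_snd hB)
    have hkey := key _ hHB
    have e1 : (fun y => ∫⁻ x, (Prod.snd ⁻¹' B : Set (X × Y)).indicator H (x, y) ∂ψ y)
        = B.indicator fun y => ∫⁻ x, H (x, y) ∂ψ y := by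
      funext y
      by_cases hy : y ∈ B
      · rw [Set.indicator_of_mem hy]
        exact lintegral_congr fun x => Set.indicator_of_mem (by exact hy) _
      · rw [Set.indicator_of_notMem hy]
        exact (lintegral_congr fun x =>
          Set.indicator_of_notMem (by exact hy) _).trans lintegral_zero
    have e2 : (fun y => ∫⁻ x, (Prod.snd ⁻¹' B : Set (X × Y)).indicator H (x, y) * q (x, y) ∂lam)
        = B.indicator fun y => ∫⁻ x, H (x, y) * q (x, y) ∂lam := by
      funext y
      by_cases hy : y ∈ B
      · rw [Set.indicator_of_mem hy]
        exact lintegral_congr fun x => by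
          rw [Set.indicator_of_mem (by exact hy : (x, y) ∈ Prod.snd ⁻¹' B)]
      · rw [Set.indicator_of_notMem hy]
        refine (lintegral_congr fun x => ?_).trans lintegral_zero
        rw [Set.indicator_of_notMem (by exact hy : (x, y) ∉ Prod.snd ⁻¹' B), zero_mul]
    rw [e1, e2] at hkey
    rw [lintegral_indicator hB, lintegral_indicator hB] at hkey
    calc ∫⁻ y in B, gq y * ∫⁻ x, H (x, y) ∂ψ y ∂ν
        = ∫⁻ y in B, (gq * fun y => ∫⁻ x, H (x, y) ∂ψ y) y ∂ν := by
          simp only [Pi.mul_apply]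
      _ = ∫⁻ y in B, (∫⁻ x, H (x, y) ∂ψ y) ∂(ν.withDensity gq) :=
          (setLIntegral_withDensity_eq_setLIntegral_mul ν hgq_meas hK hB).symm
      _ = ∫⁻ y in B, (∫⁻ x, H (x, y) ∂ψ y) ∂m := by rw [← hm_q]
      _ = ∫⁻ y in B, ∫⁻ x, H (x, y) * q (x, y) ∂lam ∂ν := hkey

  -- a.e. y facts and main estimate
  have hgq_int : ∫⁻ y, gq y ∂ν = 1 := by
    have h : ∫⁻ y, gq y ∂ν = (ν.withDensity gq) Set.univ := by
      rw [withDensity_apply _ MeasurableSet.univ, Measure.restrict_univ]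
    rw [h, ← hm_q]; exact measure_univ
  have hgq_fin : ∀ᵐ y ∂ν, gq y < ∞ :=
    ae_lt_top hgq_meas (by rw [hgq_int]; exact ENNReal.one_ne_top)
  have hae_swap : ∀ {p : X × Y → Prop}, MeasurableSet {z : X × Y | p z} →
      (∀ᵐ z ∂μ, p z) → ∀ᵐ y ∂ν, ∀ᵐ x ∂lam, p (x, y) := by
    intro p hp h
    rw [hμdef, ← Measure.prod_swap] at h
    rw [ae_map_iff measurable_swap.aemeasurable hp] at h
    exact Measure.ae_ae_of_ae_prod h
  have main : ∀ P : Measure (X × Y), IsProbabilityMeasure P → P ≪ lam.prod ν →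
      P.map Prod.snd = m →
      (∫ y, Tval lam l ψ y ∂m) ≤ (∫ p, l p.1 p.2 ∂P) + tvJ lam ν P Q := by
    intro P hPprob hPac hPm
    haveI := hPprob
    have hf : Measurable (P.rnDeriv μ) := Measure.measurable_rnDeriv _ _
    set f := P.rnDeriv μ with hfdef
    set gp : Y → ℝ≥0∞ := fun y => ∫⁻ x, f (x, y) ∂lam with hgpdef
    have hgp_meas : Measurable gp := hf.lintegral_prod_left'
    have hm_p : m = ν.withDensity gp := by
      have h := map_snd_withDensity (lam := lam) (ν := ν) (R := P) hPac
      rw [← hPm, h]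
    have hgpq : gp =ᵐ[ν] gq := by
      have h1 := Measure.rnDeriv_withDensity ν hgp_meas
      have h2 := Measure.rnDeriv_withDensity ν hgq_meas
      rw [← hm_p] at h1
      rw [← hm_q] at h2
      exact h1.symm.trans h2
    set W : X × Y → ℝ≥0∞ := fun p => if q p = 0 then 0 else f p / q p with hWdef
    have hq0_meas : MeasurableSet {p : X × Y | q p = 0} := hq (measurableSet_singleton 0)
    have hW_meas : Measurable W := Measurable.ite hq0_meas measurable_const (hf.div hq)
    set D : X × Y → ℝ≥0∞ := fun p => (f p - q p) + (q p - f p) with hDdef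
    have hD_meas : Measurable D := (hf.sub hq).add (hq.sub hf)
    set Hab : X × Y → ℝ≥0∞ := fun p => (W p - 1) + (1 - W p) with hHabdef
    have hHab_meas : Measurable Hab :=
      (hW_meas.sub measurable_const).add (measurable_const.sub hW_meas)
    have hfint : ∫⁻ p, f p ∂μ = 1 := by
      rw [hfdef, Measure.lintegral_rnDeriv hPac]; exact measure_univ
    have hqint : ∫⁻ p, q p ∂μ = 1 := by
      rw [hqdef, Measure.lintegral_rnDeriv hQac]; exact measure_univ
    have hfL_fin : ∫⁻ p, f p * L p ∂μ ≠ ∞ := by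
      refine ne_of_lt (lt_of_le_of_lt
        (lintegral_mono fun p => mul_le_mul_right (hL_le p) (f p)) ?_)
      rw [lintegral_mul_const _ hf, hfint, one_mul]
      exact ENNReal.ofReal_lt_top
    have hD_fin : ∫⁻ p, D p ∂μ ≠ ∞ := by
      refine ne_of_lt (lt_of_le_of_lt
        (lintegral_mono fun p => add_le_add tsub_le_self tsub_le_self) ?_)
      rw [lintegral_add_left hf, hfint, hqint]
      norm_num
    have hfin_slice : ∀ᵐ y ∂ν, ∀ᵐ x ∂lam, f (x, y) < ∞ ∧ q (x, y) < ∞ := by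
      refine hae_swap ((measurableSet_lt hf measurable_const).inter
        (measurableSet_lt hq measurable_const)) ?_
      exact (Measure.rnDeriv_lt_top P μ).and (Measure.rnDeriv_lt_top Q μ)
    have hsl_fL : ∀ᵐ y ∂ν, ∫⁻ x, f (x, y) * L (x, y) ∂lam ≠ ∞ := by
      have hmeas : Measurable fun p : X × Y => f p * L p := hf.mul hL_meas
      have h : ∫⁻ y, (∫⁻ x, f (x, y) * L (x, y) ∂lam) ∂ν ≠ ∞ := by
        rw [← lintegral_prod_symm' (fun p : X × Y => f p * L p) hmeas, ← hμdef]
        exact hfL_fin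
      exact (ae_lt_top hmeas.lintegral_prod_left' h).mono fun y hy => hy.ne
    have hsl_D : ∀ᵐ y ∂ν, ∫⁻ x, D (x, y) ∂lam ≠ ∞ := by
      have h : ∫⁻ y, (∫⁻ x, D (x, y) ∂lam) ∂ν ≠ ∞ := by
        rw [← lintegral_prod_symm' D hD_meas, ← hμdef]
        exact hD_fin
      exact (ae_lt_top hD_meas.lintegral_prod_left' h).mono fun y hy => hy.ne
    have t1 := tool W hW_meas
    have t2 := tool (fun p => W p * L p) (hW_meas.mul hL_meas)
    have t4 := tool Hab hHab_meas
    -- the per-y core estimate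
    have core : ∀ᵐ y ∂ν, gq y * ENNReal.ofReal (Tval lam l ψ y + C)
        ≤ (∫⁻ x, f (x, y) * L (x, y) ∂lam) + ∫⁻ x, D (x, y) ∂lam := by
      filter_upwards [hgpq, hgq_fin, hfin_slice, t1, t2, t4, hsl_fL, hsl_D]
        with y hgpqy hgfin hfin ht1 ht2 ht4 hJfin hDfin
      by_cases hg0 : gq y = 0
      · rw [hg0, zero_mul]; exact zero_le
      have hgne : gq y ≠ ∞ := hgfin.ne
      have hginv_ne : (gq y)⁻¹ ≠ ∞ := ENNReal.inv_ne_top.2 hg0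
      have hcan : ∀ a : ℝ≥0∞, gq y * ((gq y)⁻¹ * a) = a := fun a => by
        rw [← mul_assoc, ENNReal.mul_inv_cancel hg0 hgne, one_mul]
      have hcan' : ∀ a : ℝ≥0∞, (gq y)⁻¹ * (gq y * a) = a := fun a => by
        rw [← mul_assoc, ENNReal.inv_mul_cancel hg0 hgne, one_mul]
      have hWsl : Measurable fun x => W (x, y) := hW_meas.comp measurable_prodMk_right
      have hLsl : Measurable fun x => L (x, y) := hL_meas.comp measurable_prodMk_right
      have hfsl : Measurable fun x => f (x, y) := hf.comp measurable_prodMk_right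
      have hqsl : Measurable fun x => q (x, y) := hq.comp measurable_prodMk_right
      have hDslm : Measurable fun x => D (x, y) := hD_meas.comp measurable_prodMk_right
      have hHabsl : Measurable fun x => Hab (x, y) := hHab_meas.comp measurable_prodMk_right
      have hq0sl : MeasurableSet {x : X | q (x, y) = 0} := hqsl (measurableSet_singleton 0)
      have hE0sl : Measurable fun x => (if q (x, y) = 0 then f (x, y) else 0) :=
        Measurable.ite hq0sl hfsl measurable_const
      have hE1sl : Measurable fun x => (if q (x, y) = 0 then (0 : ℝ≥0∞) else f (x, y)) :=
        Measurable.ite hq0sl measurable_const hfsl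
      have hJ0sl : Measurable fun x => (if q (x, y) = 0 then f (x, y) * L (x, y) else 0) :=
        Measurable.ite hq0sl (hfsl.mul hLsl) measurable_const
      set r : X → ℝ≥0∞ := (ψ y).rnDeriv lam with hrdef
      have hr_meas : Measurable r := Measure.measurable_rnDeriv _ _
      have hψy : lam.withDensity r = ψ y := Measure.withDensity_rnDeriv_eq _ _ (hψ_ac y)
      have hr_fin : ∀ᵐ x ∂lam, r x < ∞ := Measure.rnDeriv_lt_top _ _
      set e : X → ℝ≥0∞ := fun x => (gq y)⁻¹ * (if q (x, y) = 0 then f (x, y) else 0) with hedef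
      have he_meas : Measurable e := measurable_const.mul hE0sl
      set v : X → ℝ≥0∞ := fun x => r x * W (x, y) + e x with hvdef
      have hv_meas : Measurable v := (hr_meas.mul hWsl).add he_meas
      have hpsi_int : ∀ (F : X → ℝ≥0∞), Measurable F →
          ∫⁻ x, F x ∂ψ y = ∫⁻ x, r x * F x ∂lam := by
        intro F hF
        conv_lhs => rw [← hψy]
        rw [lintegral_withDensity_eq_lintegral_mul lam hr_meas hF]
        simp only [Pi.mul_apply]
      have hI : gq y * ∫⁻ x, W (x, y) ∂ψ y
          = ∫⁻ x, (if q (x, y) = 0 then 0 else f (x, y)) ∂lam := by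
        rw [ht1]
        refine lintegral_congr_ae ?_
        filter_upwards [hfin] with x hx
        by_cases h : q (x, y) = 0
        · simp [hWdef, h]
        · simp only [hWdef, if_neg h]
          exact ENNReal.div_mul_cancel h hx.2.ne
      have hIsplit : (∫⁻ x, (if q (x, y) = 0 then 0 else f (x, y)) ∂lam)
          + (∫⁻ x, (if q (x, y) = 0 then f (x, y) else 0) ∂lam) = gq y := by
        rw [← lintegral_add_left hE1sl, ← hgpqy]
        have h : ∫⁻ x, ((if q (x, y) = 0 then 0 else f (x, y))
            + (if q (x, y) = 0 then f (x, y) else 0)) ∂lam = ∫⁻ x, f (x, y) ∂lam := by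
          refine lintegral_congr fun x => ?_
          by_cases h : q (x, y) = 0 <;> simp [h]
        rw [h, hgpdef]
      have hJ : gq y * ∫⁻ x, W (x, y) * L (x, y) ∂ψ y
          = ∫⁻ x, (if q (x, y) = 0 then 0 else f (x, y) * L (x, y)) ∂lam := by
        rw [ht2]
        refine lintegral_congr_ae ?_
        filter_upwards [hfin] with x hx
        by_cases h : q (x, y) = 0
        · simp [hWdef, h]
        · simp only [hWdef, if_neg h]
          rw [mul_right_comm, ENNReal.div_mul_cancel h hx.2.ne]
      have hJsplit : (∫⁻ x, (if q (x, y) = 0 then 0 else f (x, y) * L (x, y)) ∂lam)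
          + (∫⁻ x, (if q (x, y) = 0 then f (x, y) * L (x, y) else 0) ∂lam)
          = ∫⁻ x, f (x, y) * L (x, y) ∂lam := by
        rw [← lintegral_add_left (f := fun x => if q (x, y) = 0 then 0 else f (x, y) * L (x, y))
          (Measurable.ite hq0sl measurable_const (hfsl.mul hLsl))]
        refine lintegral_congr fun x => ?_
        by_cases h : q (x, y) = 0 <;> simp [h]
      have hmass : ∫⁻ x, v x ∂lam = 1 := by
        have h1 : ∫⁻ x, v x ∂lam = (∫⁻ x, W (x, y) ∂ψ y)
            + (gq y)⁻¹ * ∫⁻ x, (if q (x, y) = 0 then f (x, y) else 0) ∂lam := by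
          rw [hvdef]
          rw [lintegral_add_left (f := fun x => r x * W (x, y)) (hr_meas.mul hWsl), ← hpsi_int _ hWsl, hedef,
            lintegral_const_mul _ hE0sl]
        have h2 : gq y * (∫⁻ x, v x ∂lam) = gq y * 1 := by
          rw [h1, mul_add, hcan, hI, hIsplit, mul_one]
        exact (ENNReal.mul_right_inj hg0 hgne).1 h2
      set η : Measure X := lam.withDensity v with hηdef
      haveI hη_prob : IsProbabilityMeasure η := ⟨by
        rw [hηdef, withDensity_apply _ MeasurableSet.univ, Measure.restrict_univ]
        exact hmass⟩
      have hη_ac : η ≪ lam := withDensity_absolutelyContinuous lam v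
      have hηrn : η.rnDeriv lam =ᵐ[lam] v := by
        rw [hηdef]; exact Measure.rnDeriv_withDensity lam hv_meas
      have hLeta : gq y * ∫⁻ x, L (x, y) ∂η = ∫⁻ x, f (x, y) * L (x, y) ∂lam := by
        have hpt : ∀ x, v x * L (x, y) = r x * (W (x, y) * L (x, y))
            + (gq y)⁻¹ * (if q (x, y) = 0 then f (x, y) * L (x, y) else 0) := by
          intro x
          simp only [hvdef, hedef]
          by_cases h : q (x, y) = 0
          · rw [if_pos h, if_pos h]; ring
          · rw [if_neg h, if_neg h]; ring
        have h1 : ∫⁻ x, L (x, y) ∂η = (∫⁻ x, W (x, y) * L (x, y) ∂ψ y)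
            + (gq y)⁻¹ * ∫⁻ x, (if q (x, y) = 0 then f (x, y) * L (x, y) else 0) ∂lam := by
          rw [hηdef, lintegral_withDensity_eq_lintegral_mul lam hv_meas hLsl]
          simp only [Pi.mul_apply]
          rw [lintegral_congr hpt,
            lintegral_add_left (f := fun x => r x * (W (x, y) * L (x, y))) (hr_meas.mul (hWsl.mul hLsl)),
            ← hpsi_int (fun x => W (x, y) * L (x, y)) (hWsl.mul hLsl), lintegral_const_mul _ hJ0sl]
        rw [h1, mul_add, hcan, hJ, hJsplit]
      have hW_fin : ∀ᵐ x ∂lam, W (x, y) < ∞ := by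
        filter_upwards [hfin] with x hx
        by_cases h : q (x, y) = 0
        · simp [hWdef, h]
        · simp only [hWdef, if_neg h]
          exact ENNReal.div_lt_top hx.1.ne h
      have hv_fin : ∀ᵐ x ∂lam, v x < ∞ := by
        filter_upwards [hr_fin, hW_fin, hfin] with x h1 h2 h3
        rw [hvdef]
        refine ENNReal.add_lt_top.2 ⟨ENNReal.mul_lt_top h1 h2, ?_⟩
        rw [hedef]
        refine ENNReal.mul_lt_top (lt_top_iff_ne_top.2 hginv_ne) ?_
        by_cases h : q (x, y) = 0 <;> simp [h, h3.1]
      have htvX : tvX lam η (ψ y) ≤ ((gq y)⁻¹ * ∫⁻ x, D (x, y) ∂lam).toReal := by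
        have hstep1 : tvX lam η (ψ y)
            = ∫ x, ((v x - r x) + (r x - v x)).toReal ∂lam := by
          refine integral_congr_ae ?_
          filter_upwards [hηrn, hv_fin, hr_fin] with x h1 h2 h3
          show |(η.rnDeriv lam x).toReal - ((ψ y).rnDeriv lam x).toReal| = _
          rw [h1, ← hrdef]
          exact abs_toReal_sub h2.ne h3.ne
        have hstep2 : ∫ x, ((v x - r x) + (r x - v x)).toReal ∂lam
            = (∫⁻ x, ((v x - r x) + (r x - v x)) ∂lam).toReal := by
          refine integral_toReal (((hv_meas.sub hr_meas).add (hr_meas.sub hv_meas)).aemeasurable) ?_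
          filter_upwards [hv_fin, hr_fin] with x h1 h2
          exact lt_of_le_of_lt (add_le_add tsub_le_self tsub_le_self)
            (ENNReal.add_lt_top.2 ⟨h1, h2⟩)
        have hstep3 : ∫⁻ x, ((v x - r x) + (r x - v x)) ∂lam
            ≤ (∫⁻ x, Hab (x, y) ∂ψ y)
              + (gq y)⁻¹ * ∫⁻ x, (if q (x, y) = 0 then f (x, y) else 0) ∂lam := by
          have hb : ∀ᵐ x ∂lam, (v x - r x) + (r x - v x) ≤ r x * Hab (x, y) + e x := by
            filter_upwards [hr_fin] with x hx
            have hrw : r x * Hab (x, y)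
                = (r x * W (x, y) - r x) + (r x - r x * W (x, y)) := by
              rw [hHabdef]
              rw [mul_add, ENNReal.mul_sub (fun _ _ => hx.ne),
                ENNReal.mul_sub (fun _ _ => hx.ne), mul_one]
            have h1 : v x - r x ≤ (r x * W (x, y) - r x) + e x := by
              rw [hvdef]
              refine tsub_le_iff_right.2 ?_
              calc r x * W (x, y) + e x
                  ≤ ((r x * W (x, y) - r x) + r x) + e x := add_le_add_left le_tsub_add _
                _ = (r x * W (x, y) - r x) + e x + r x := by ring
            have h2 : r x - v x ≤ r x - r x * W (x, y) := by
              rw [hvdef]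
              exact tsub_le_tsub_left (le_add_right le_rfl) _
            calc (v x - r x) + (r x - v x)
                ≤ ((r x * W (x, y) - r x) + e x) + (r x - r x * W (x, y)) := add_le_add h1 h2
              _ = ((r x * W (x, y) - r x) + (r x - r x * W (x, y))) + e x := by ring
              _ = r x * Hab (x, y) + e x := by rw [hrw]
          calc ∫⁻ x, ((v x - r x) + (r x - v x)) ∂lam
              ≤ ∫⁻ x, (r x * Hab (x, y) + e x) ∂lam := lintegral_mono_ae hb
            _ = (∫⁻ x, r x * Hab (x, y) ∂lam) + ∫⁻ x, e x ∂lam :=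
                lintegral_add_left (hr_meas.mul hHabsl) _
            _ = (∫⁻ x, Hab (x, y) ∂ψ y)
                + (gq y)⁻¹ * ∫⁻ x, (if q (x, y) = 0 then f (x, y) else 0) ∂lam := by
                rw [← hpsi_int _ hHabsl, hedef, lintegral_const_mul _ hE0sl]
        have hDid : gq y * ((∫⁻ x, Hab (x, y) ∂ψ y)
            + (gq y)⁻¹ * ∫⁻ x, (if q (x, y) = 0 then f (x, y) else 0) ∂lam)
            = ∫⁻ x, D (x, y) ∂lam := by
          rw [mul_add, hcan, ht4]
          have e1 : ∀ᵐ x ∂lam, Hab (x, y) * q (x, y)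
              = (if q (x, y) = 0 then 0 else D (x, y)) := by
            filter_upwards [hfin] with x hx
            by_cases h : q (x, y) = 0
            · simp [h]
            · simp only [hHabdef, hWdef, hDdef, if_neg h]
              rw [add_mul, ENNReal.sub_mul (fun _ _ => hx.2.ne),
                ENNReal.sub_mul (fun _ _ => hx.2.ne), one_mul,
                ENNReal.div_mul_cancel h hx.2.ne]
          have e2 : ∀ x, (if q (x, y) = 0 then f (x, y) else 0)
              = (if q (x, y) = 0 then D (x, y) else 0) := by
            intro x
            by_cases h : q (x, y) = 0 <;> simp [hDdef, h, zero_tsub]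
          rw [lintegral_congr_ae e1, lintegral_congr e2,
            ← lintegral_add_left (Measurable.ite hq0sl measurable_const hDslm)]
          refine lintegral_congr fun x => ?_
          by_cases h : q (x, y) = 0 <;> simp [h]
        have hle2 : (∫⁻ x, Hab (x, y) ∂ψ y)
            + (gq y)⁻¹ * ∫⁻ x, (if q (x, y) = 0 then f (x, y) else 0) ∂lam
            = (gq y)⁻¹ * ∫⁻ x, D (x, y) ∂lam := by
          rw [← hDid, hcan']
        rw [hstep1, hstep2]
        exact ENNReal.toReal_mono (ENNReal.mul_ne_top hginv_ne hDfin)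
          (le_trans hstep3 (le_of_eq hle2))
      have hTle : Tval lam l ψ y ≤ (∫ x, l x y ∂η) + tvX lam η (ψ y) :=
        hT_le y η hη_prob hη_ac
      have hleta : ∫ x, l x y ∂η = (∫⁻ x, L (x, y) ∂η).toReal - C :=
        integral_eq_lintegral_ofReal_sub η (hl_meas.comp measurable_prodMk_right)
          (fun x => hC x y)
      have hLeta' : ∫⁻ x, L (x, y) ∂η
          = (gq y)⁻¹ * ∫⁻ x, f (x, y) * L (x, y) ∂lam := by
        rw [← hLeta, hcan']
      have hfinal : Tval lam l ψ y + C
          ≤ ((gq y)⁻¹ * ((∫⁻ x, f (x, y) * L (x, y) ∂lam) + ∫⁻ x, D (x, y) ∂lam)).toReal := by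
        have h1 := hTle
        rw [hleta, hLeta'] at h1
        have h2 : ((gq y)⁻¹ * ∫⁻ x, f (x, y) * L (x, y) ∂lam) ≠ ∞ :=
          ENNReal.mul_ne_top hginv_ne hJfin
        have h3 : ((gq y)⁻¹ * ∫⁻ x, D (x, y) ∂lam) ≠ ∞ :=
          ENNReal.mul_ne_top hginv_ne hDfin
        rw [mul_add, ENNReal.toReal_add h2 h3]
        linarith [htvX]
      calc gq y * ENNReal.ofReal (Tval lam l ψ y + C)
          ≤ gq y * ((gq y)⁻¹ * ((∫⁻ x, f (x, y) * L (x, y) ∂lam) + ∫⁻ x, D (x, y) ∂lam)) :=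
            mul_le_mul_right (ENNReal.ofReal_le_of_le_toReal hfinal) _
        _ = _ := hcan _
    -- assemble
    have hT'_meas : Measurable fun y => ENNReal.ofReal (Tval lam l ψ y + C) :=
      (hT_meas.add measurable_const).ennreal_ofReal
    have hTm : ∫ y, Tval lam l ψ y ∂m
        = (∫⁻ y, ENNReal.ofReal (Tval lam l ψ y + C) ∂m).toReal - C :=
      integral_eq_lintegral_ofReal_sub m hT_meas hT_abs
    have hTm2 : ∫⁻ y, ENNReal.ofReal (Tval lam l ψ y + C) ∂m
        = ∫⁻ y, gq y * ENNReal.ofReal (Tval lam l ψ y + C) ∂ν := by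
      conv_lhs => rw [hm_q]
      rw [lintegral_withDensity_eq_lintegral_mul ν hgq_meas hT'_meas]
      simp only [Pi.mul_apply]
    have hsum : ∫⁻ y, ((∫⁻ x, f (x, y) * L (x, y) ∂lam) + ∫⁻ x, D (x, y) ∂lam) ∂ν
        = (∫⁻ p, f p * L p ∂μ) + ∫⁻ p, D p ∂μ := by
      rw [lintegral_add_left (f := fun y => ∫⁻ x, f (x, y) * L (x, y) ∂lam)
          ((hf.mul hL_meas).lintegral_prod_left'), hμdef,
        lintegral_prod_symm' (fun p : X × Y => f p * L p) (hf.mul hL_meas),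
        lintegral_prod_symm' D hD_meas]
    have hmono : ∫⁻ y, ENNReal.ofReal (Tval lam l ψ y + C) ∂m
        ≤ (∫⁻ p, f p * L p ∂μ) + ∫⁻ p, D p ∂μ := by
      rw [hTm2, ← hsum]
      exact lintegral_mono_ae core
    have hlP : ∫ p, l p.1 p.2 ∂P = (∫⁻ p, f p * L p ∂μ).toReal - C := by
      rw [integral_eq_lintegral_ofReal_sub P hl_meas (fun p => hC p.1 p.2)]
      congr 2
      conv_lhs => rw [show P = μ.withDensity f from (Measure.withDensity_rnDeriv_eq _ _ hPac).symm]
      rw [lintegral_withDensity_eq_lintegral_mul _ hf hL_meas]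
      simp only [Pi.mul_apply]
    have htvJ : tvJ lam ν P Q = (∫⁻ p, D p ∂μ).toReal := by
      have hae : ∀ᵐ p ∂μ,
          |(P.rnDeriv (lam.prod ν) p).toReal - (Q.rnDeriv (lam.prod ν) p).toReal|
          = (D p).toReal := by
        filter_upwards [Measure.rnDeriv_lt_top P μ, Measure.rnDeriv_lt_top Q μ] with p h1 h2
        exact abs_toReal_sub h1.ne h2.ne
      show (∫ p, |(P.rnDeriv (lam.prod ν) p).toReal - (Q.rnDeriv (lam.prod ν) p).toReal|
        ∂(lam.prod ν)) = _
      rw [show lam.prod ν = μ from hμdef.symm, integral_congr_ae hae]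
      refine integral_toReal hD_meas.aemeasurable ?_
      filter_upwards [Measure.rnDeriv_lt_top P μ, Measure.rnDeriv_lt_top Q μ] with p h1 h2
      exact lt_of_le_of_lt (add_le_add tsub_le_self tsub_le_self)
        (ENNReal.add_lt_top.2 ⟨h1, h2⟩)
    rw [hTm, hlP, htvJ]
    have hfin2 : (∫⁻ p, f p * L p ∂μ) + ∫⁻ p, D p ∂μ ≠ ∞ :=
      ENNReal.add_ne_top.2 ⟨hfL_fin, hD_fin⟩
    have hmono2 := ENNReal.toReal_mono hfin2 hmono
    rw [ENNReal.toReal_add hfL_fin hD_fin] at hmono2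
    linarith
  refine ⟨main, ?_⟩
  haveI : Nonempty {P : Measure (X × Y) //
      IsProbabilityMeasure P ∧ P ≪ lam.prod ν ∧ P.map Prod.snd = m} :=
    ⟨⟨Q, inferInstance, hQac, hQm⟩⟩
  rw [Rval]
  refine le_ciInf ?_
  rintro ⟨P, hP1, hP2, hP3⟩
  exact main P hP1 hP2 hP3


end DIMG
end
end

section
/- Upper bound in the joint+marginal lemma via measurable selection: if ζ : Y → P(X) is a measurable map such that ζ(y) ∈ P*_y for every y ∈ Y (i.e. ∫_X l(x,y) ζ(y)(dx) + ∫_X |dζ(y)/dλ − dψ(·|y)/dλ| dλ = T(y) for all y), then the probability measure P_ζ(dx,dy) := ζ(y)(dx) m(dy) is feasible (it is absolutely continuous with respect to λ⊗ν and has Y-marginal m) and satisfies ∫ l dP_ζ + ∫ |dP_ζ − dQ| ≤ ∫_Y T(y) m(dy); in particular R ≤ ∫_Y T(y) m(dy). -/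
open MeasureTheory
open scoped ENNReal NNReal

noncomputable section

namespace DIMG

open ProbabilityTheory Set

lemma abs_integral_le_integral_abs_aux {α : Type*} [MeasurableSpace α] {μ : Measure α}
    {f : α → ℝ} : |∫ a, f a ∂μ| ≤ ∫ a, |f a| ∂μ := by
  simpa [Real.norm_eq_abs] using norm_integral_le_integral_norm (μ := μ) f

section TVgeneric

variable {α : Type*} [MeasurableSpace α] {μ P Q : Measure α}

lemma integrable_of_bdd [IsFiniteMeasure μ] {f : α → ℝ}
    (hf : AEStronglyMeasurable f μ) {C : ℝ} (hC : ∀ a, |f a| ≤ C) : Integrable f μ :=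
  ⟨hf, HasFiniteIntegral.of_bounded (C := C)
    (Filter.Eventually.of_forall fun a => by simpa [Real.norm_eq_abs] using hC a)⟩

lemma lintegral_rnDeriv_sub_le_one [IsProbabilityMeasure μ] [IsProbabilityMeasure P]
    (hP : P ≪ μ) :
    ∫⁻ a, (P.rnDeriv μ a - Q.rnDeriv μ a) ∂μ ≤ 1 := by
  calc ∫⁻ a, (P.rnDeriv μ a - Q.rnDeriv μ a) ∂μ
      ≤ ∫⁻ a, P.rnDeriv μ a ∂μ := lintegral_mono fun a => tsub_le_self
    _ = P Set.univ := Measure.lintegral_rnDeriv hP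
    _ = 1 := measure_univ

lemma lintegral_rnDeriv_sub_symm [IsProbabilityMeasure μ] [IsProbabilityMeasure P]
    [IsProbabilityMeasure Q] (hP : P ≪ μ) (hQ : Q ≪ μ) :
    ∫⁻ a, (P.rnDeriv μ a - Q.rnDeriv μ a) ∂μ = ∫⁻ a, (Q.rnDeriv μ a - P.rnDeriv μ a) ∂μ := by
  have hPm := Measure.measurable_rnDeriv P μ
  have hQm := Measure.measurable_rnDeriv Q μ
  have h1 : ∫⁻ a, (P.rnDeriv μ a - Q.rnDeriv μ a) ∂μ
      + ∫⁻ a, min (P.rnDeriv μ a) (Q.rnDeriv μ a) ∂μ = 1 := by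
    rw [← lintegral_add_left (f := fun a => P.rnDeriv μ a - Q.rnDeriv μ a) (hPm.sub hQm)]
    simp_rw [tsub_add_min]
    rw [Measure.lintegral_rnDeriv hP, measure_univ]
  have h2 : ∫⁻ a, (Q.rnDeriv μ a - P.rnDeriv μ a) ∂μ
      + ∫⁻ a, min (Q.rnDeriv μ a) (P.rnDeriv μ a) ∂μ = 1 := by
    rw [← lintegral_add_left (f := fun a => Q.rnDeriv μ a - P.rnDeriv μ a) (hQm.sub hPm)]
    simp_rw [tsub_add_min]
    rw [Measure.lintegral_rnDeriv hQ, measure_univ]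
  have hmin : ∫⁻ a, min (P.rnDeriv μ a) (Q.rnDeriv μ a) ∂μ
      = ∫⁻ a, min (Q.rnDeriv μ a) (P.rnDeriv μ a) ∂μ := by
    simp_rw [min_comm]
  rw [hmin] at h1
  have hfin : ∫⁻ a, min (Q.rnDeriv μ a) (P.rnDeriv μ a) ∂μ ≠ ∞ := by
    refine ne_of_lt (lt_of_le_of_lt ?_ (by norm_num : (1:ℝ≥0∞) < ∞))
    calc ∫⁻ a, min (Q.rnDeriv μ a) (P.rnDeriv μ a) ∂μ ≤ ∫⁻ a, Q.rnDeriv μ a ∂μ :=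
          lintegral_mono fun a => min_le_left _ _
      _ = 1 := by rw [Measure.lintegral_rnDeriv hQ, measure_univ]
  exact (ENNReal.add_left_inj hfin).1 (h1.trans h2.symm)

lemma tv_formula [IsProbabilityMeasure μ] [IsProbabilityMeasure P]
    [IsProbabilityMeasure Q] (hP : P ≪ μ) (hQ : Q ≪ μ) :
    ∫ a, |(P.rnDeriv μ a).toReal - (Q.rnDeriv μ a).toReal| ∂μ
      = 2 * (∫⁻ a, (P.rnDeriv μ a - Q.rnDeriv μ a) ∂μ).toReal := by
  have hPm := Measure.measurable_rnDeriv P μ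
  have hQm := Measure.measurable_rnDeriv Q μ
  have hae : ∀ᵐ a ∂μ, |(P.rnDeriv μ a).toReal - (Q.rnDeriv μ a).toReal|
      = ((P.rnDeriv μ a - Q.rnDeriv μ a) + (Q.rnDeriv μ a - P.rnDeriv μ a)).toReal := by
    filter_upwards [Measure.rnDeriv_lt_top P μ, Measure.rnDeriv_lt_top Q μ] with a ha hb
    rcases le_total (P.rnDeriv μ a) (Q.rnDeriv μ a) with h | h
    · rw [tsub_eq_zero_of_le h, zero_add, ENNReal.toReal_sub_of_le h hb.ne,
        abs_sub_comm, abs_of_nonneg (sub_nonneg.2 (ENNReal.toReal_mono hb.ne h))]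
    · rw [tsub_eq_zero_of_le h, add_zero, ENNReal.toReal_sub_of_le h ha.ne,
        abs_of_nonneg (sub_nonneg.2 (ENNReal.toReal_mono ha.ne h))]
  rw [integral_congr_ae hae]
  have hfinae : ∀ᵐ a ∂μ, (P.rnDeriv μ a - Q.rnDeriv μ a) + (Q.rnDeriv μ a - P.rnDeriv μ a) < ∞ := by
    filter_upwards [Measure.rnDeriv_lt_top P μ, Measure.rnDeriv_lt_top Q μ] with a ha hb
    exact ENNReal.add_lt_top.2 ⟨lt_of_le_of_lt tsub_le_self ha, lt_of_le_of_lt tsub_le_self hb⟩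
  rw [integral_toReal (f := fun a => (P.rnDeriv μ a - Q.rnDeriv μ a) + (Q.rnDeriv μ a - P.rnDeriv μ a)) ((hPm.sub hQm).add (hQm.sub hPm)).aemeasurable hfinae,
    lintegral_add_left (f := fun a => P.rnDeriv μ a - Q.rnDeriv μ a) (hPm.sub hQm), ← lintegral_rnDeriv_sub_symm hP hQ, ← two_mul,
    ENNReal.toReal_mul]
  norm_num

lemma meas_le_add_lintegral [IsProbabilityMeasure μ] [IsProbabilityMeasure P]
    [IsProbabilityMeasure Q] (hP : P ≪ μ) (hQ : Q ≪ μ) (A : Set α) :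
    P A ≤ Q A + ∫⁻ a, (P.rnDeriv μ a - Q.rnDeriv μ a) ∂μ := by
  have hPm := Measure.measurable_rnDeriv P μ
  have hQm := Measure.measurable_rnDeriv Q μ
  calc P A = ∫⁻ a in A, P.rnDeriv μ a ∂μ := (Measure.setLIntegral_rnDeriv hP A).symm
    _ ≤ ∫⁻ a in A, (Q.rnDeriv μ a + (P.rnDeriv μ a - Q.rnDeriv μ a)) ∂μ :=
        lintegral_mono fun a => by rw [add_comm]; exact le_tsub_add
    _ = ∫⁻ a in A, Q.rnDeriv μ a ∂μ + ∫⁻ a in A, (P.rnDeriv μ a - Q.rnDeriv μ a) ∂μ :=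
        lintegral_add_left hQm _
    _ ≤ Q A + ∫⁻ a, (P.rnDeriv μ a - Q.rnDeriv μ a) ∂μ := by
        gcongr
        · rw [Measure.setLIntegral_rnDeriv hQ A]
        · exact Measure.restrict_le_self

lemma tvX_nonneg {X : Type*} [MeasurableSpace X] (lam η η' : Measure X) :
    0 ≤ tvX lam η η' := integral_nonneg fun x => abs_nonneg _

end TVgeneric




section MixJoint

variable {X Y : Type*} [MeasurableSpace X] [MeasurableSpace Y]
  {m : Measure Y} {ρ : Y → Measure X}

/-- the kernel associated to a measurable family of measures -/
def famKernel (ρ : Y → Measure X) (h : Measurable ρ) : Kernel Y X := ⟨ρ, h⟩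

lemma famKernel_apply (h : Measurable ρ) (y : Y) : famKernel ρ h y = ρ y := rfl

lemma famKernel_markov (h : Measurable ρ) (hp : ∀ y, IsProbabilityMeasure (ρ y)) :
    IsMarkovKernel (famKernel ρ h) := ⟨fun y => hp y⟩

lemma mixJoint_apply (hρ : Measurable ρ) (hprob : ∀ y, IsProbabilityMeasure (ρ y))
    {s : Set (X × Y)} (hs : MeasurableSet s) :
    mixJoint m ρ s = ∫⁻ y, ρ y ((fun x => (x, y)) ⁻¹' s) ∂m := by
  haveI := famKernel_markov hρ hprob
  have hmeas : Measurable fun y => ((ρ y).map fun x => (x, y)) := by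
    refine Measure.measurable_of_measurable_coe _ fun t ht => ?_
    simp_rw [Measure.map_apply measurable_prodMk_right ht]
    exact Kernel.measurable_kernel_prodMk_right (κ := famKernel ρ hρ) ht
  rw [mixJoint, Measure.bind_apply hs hmeas.aemeasurable]
  exact lintegral_congr fun y => Measure.map_apply measurable_prodMk_right hs

lemma mixJoint_prob [IsProbabilityMeasure m] (hρ : Measurable ρ)
    (hprob : ∀ y, IsProbabilityMeasure (ρ y)) :
    IsProbabilityMeasure (mixJoint m ρ) := by
  constructor
  rw [mixJoint_apply hρ hprob MeasurableSet.univ]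
  have : ∀ y, ρ y ((fun x => (x, y)) ⁻¹' Set.univ) = 1 := fun y => by
    simp [measure_univ]
  simp_rw [this]
  simp

lemma mixJoint_map_snd [IsProbabilityMeasure m] (hρ : Measurable ρ)
    (hprob : ∀ y, IsProbabilityMeasure (ρ y)) :
    (mixJoint m ρ).map Prod.snd = m := by
  ext s hs
  rw [Measure.map_apply measurable_snd hs, mixJoint_apply hρ hprob (measurable_snd hs)]
  have : ∀ y, ρ y ((fun x => (x, y)) ⁻¹' (Prod.snd ⁻¹' s)) = s.indicator (fun _ => 1) y := by
    intro y
    by_cases hy : y ∈ s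
    · have : ((fun x : X => (x, y)) ⁻¹' (Prod.snd ⁻¹' s)) = Set.univ := by
        ext x; simp [hy]
      simp [this, measure_univ, Set.indicator_of_mem hy]
    · have : ((fun x : X => (x, y)) ⁻¹' (Prod.snd ⁻¹' s)) = ∅ := by
        ext x; simp [hy]
      simp [this, Set.indicator_of_notMem hy]
  simp_rw [this]
  rw [lintegral_indicator hs]
  simp

lemma mixJoint_ac {lam : Measure X} {ν : Measure Y} [SFinite lam] [SFinite ν] [SFinite m]
    (hm : m ≪ ν) (hρ : Measurable ρ) (hprob : ∀ y, IsProbabilityMeasure (ρ y))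
    (hac : ∀ y, ρ y ≪ lam) :
    mixJoint m ρ ≪ lam.prod ν := by
  refine Measure.AbsolutelyContinuous.mk fun s hs h0 => ?_
  have h0' : (ν.prod lam) (Prod.swap ⁻¹' s) = 0 := by
    rw [← Measure.prod_swap, Measure.map_apply measurable_swap hs] at h0
    exact h0
  have hslice := (Measure.measure_prod_null (hs.preimage measurable_swap)).1 h0'
  have hslice' : ∀ᵐ y ∂m, lam ((fun x => (x, y)) ⁻¹' s) = 0 := by
    refine hm.ae_le ?_
    filter_upwards [hslice] with y hy
    exact hy
  rw [mixJoint_apply hρ hprob hs]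
  rw [lintegral_congr_ae (g := fun _ => 0) ?_, lintegral_zero]
  filter_upwards [hslice'] with y hy
  exact hac y hy

lemma mixJoint_eq_compProd_swap (hρ : Measurable ρ) (hprob : ∀ y, IsProbabilityMeasure (ρ y))
    [SFinite m] :
    mixJoint m ρ = (m.compProd (famKernel ρ hρ)).map Prod.swap := by
  haveI := famKernel_markov hρ hprob
  ext s hs
  rw [Measure.map_apply measurable_swap hs,
    Measure.compProd_apply (hs.preimage measurable_swap), mixJoint_apply hρ hprob hs]
  rfl

lemma mixJoint_integral [IsProbabilityMeasure m] (hρ : Measurable ρ)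
    (hprob : ∀ y, IsProbabilityMeasure (ρ y)) {f : X × Y → ℝ} (hf : Measurable f)
    {C : ℝ} (hC : ∀ p, |f p| ≤ C) :
    ∫ p, f p ∂(mixJoint m ρ) = ∫ y, ∫ x, f (x, y) ∂(ρ y) ∂m := by
  haveI := famKernel_markov hρ hprob
  have hint : Integrable (fun q : Y × X => f (q.2, q.1)) (m.compProd (famKernel ρ hρ)) := by
    refine ⟨(hf.comp measurable_swap).aestronglyMeasurable, ?_⟩
    exact HasFiniteIntegral.of_bounded (C := C)
      (Filter.Eventually.of_forall fun q => by simpa [Real.norm_eq_abs] using hC (q.2, q.1))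
  rw [mixJoint_eq_compProd_swap hρ hprob,
    integral_map measurable_swap.aemeasurable hf.aestronglyMeasurable]
  show ∫ q : Y × X, f (q.2, q.1) ∂(m.compProd (famKernel ρ hρ)) = _
  rw [Measure.integral_compProd hint]
  rfl

end MixJoint






section TvalChar
variable {X : Type*} [MeasurableSpace X]

lemma integrable_rnDeriv_toReal (lam η : Measure X) [IsFiniteMeasure η] [SigmaFinite lam] :
    Integrable (fun x => (η.rnDeriv lam x).toReal) lam :=
  integrable_toReal_of_lintegral_ne_top (Measure.measurable_rnDeriv _ _).aemeasurable
    (ne_of_lt (lt_of_le_of_lt Measure.lintegral_rnDeriv_le (measure_lt_top η _)))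

lemma value_lower_bound (lam : Measure X) [IsProbabilityMeasure lam]
    (ℓ : X → ℝ) (hℓ : Measurable ℓ) {C : ℝ} (hC : ∀ x, |ℓ x| ≤ C)
    (ψ0 : Measure X) (η : Measure X) [IsProbabilityMeasure η] :
    -C ≤ (∫ x, ℓ x ∂η) + tvX lam η ψ0 := by
  have h1 : -C ≤ ∫ x, ℓ x ∂η := by
    have : ∫ x, (-C : ℝ) ∂η ≤ ∫ x, ℓ x ∂η := by
      refine integral_mono (integrable_const _) (integrable_of_bdd hℓ.aestronglyMeasurable hC) ?_
      intro x
      have := (abs_le.1 (hC x)).1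
      show -C ≤ ℓ x
      linarith
    simpa [measure_univ] using this
  have h2 := tvX_nonneg lam η ψ0
  linarith

lemma iInf_value_eq (lam : Measure X) [IsProbabilityMeasure lam]
    (ℓ : X → ℝ) (hℓ : Measurable ℓ) {C : ℝ} (hC : ∀ x, |ℓ x| ≤ C)
    (ψ0 : Measure X) [IsProbabilityMeasure ψ0] (hψ0 : ψ0 ≪ lam)
    {b : ℝ} (hb_ae : ∀ᵐ x ∂lam, b ≤ ℓ x) (hb_pos : ∀ r, b < r → lam {x | ℓ x < r} ≠ 0) :
    (⨅ η : {η : Measure X // IsProbabilityMeasure η ∧ η ≪ lam},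
      (∫ x, ℓ x ∂(η : Measure X)) + tvX lam (η : Measure X) ψ0)
      = ∫ x, min (ℓ x) (b + 2) ∂ψ0 := by
  haveI : Nonempty {η : Measure X // IsProbabilityMeasure η ∧ η ≪ lam} :=
    ⟨⟨lam, inferInstance, Measure.AbsolutelyContinuous.rfl⟩⟩
  set M : X → ℝ := fun x => min (ℓ x) (b + 2) with hM_def
  have hM_meas : Measurable M := hℓ.min measurable_const
  have hXne : Nonempty X := by
    by_contra h
    have hempty : (Set.univ : Set X) = ∅ := by
      ext x; exact absurd ⟨x⟩ h
    have h1 : lam Set.univ = 1 := measure_univ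
    rw [hempty] at h1
    simp at h1
  have hC0 : 0 ≤ C := le_trans (abs_nonneg _) (hC hXne.some)
  have hM_bdd : ∀ x, |M x| ≤ C + |b| + 2 := by
    intro x
    have h1 := hC x
    have h2 : |b + 2| ≤ |b| + 2 := by
      calc |b + 2| ≤ |b| + |(2:ℝ)| := abs_add_le b 2
        _ = |b| + 2 := by norm_num
    have hb0 := abs_nonneg b
    rcases le_total (ℓ x) (b + 2) with h | h
    · show |min (ℓ x) (b + 2)| ≤ C + |b| + 2
      rw [min_eq_left h]
      linarith
    · show |min (ℓ x) (b + 2)| ≤ C + |b| + 2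
      rw [min_eq_right h]
      linarith
  -- Lower bound: every feasible η has value at least ∫ M dψ0
  have hlow : ∀ η : {η : Measure X // IsProbabilityMeasure η ∧ η ≪ lam},
      ∫ x, M x ∂ψ0 ≤ (∫ x, ℓ x ∂(η : Measure X)) + tvX lam (η : Measure X) ψ0 := by
    rintro ⟨η, hηp, hηa⟩
    haveI := hηp
    simp only
    set dη : X → ℝ := fun x => (η.rnDeriv lam x).toReal with hdη_def
    set dψ : X → ℝ := fun x => (ψ0.rnDeriv lam x).toReal with hdψ_def
    have hdη_meas : Measurable dη := (Measure.measurable_rnDeriv _ _).ennreal_toReal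
    have hdψ_meas : Measurable dψ := (Measure.measurable_rnDeriv _ _).ennreal_toReal
    have hdη_int : Integrable dη lam := integrable_rnDeriv_toReal lam η
    have hdψ_int : Integrable dψ lam := integrable_rnDeriv_toReal lam ψ0
    have hdη_one : ∫ x, dη x ∂lam = 1 := by
      rw [hdη_def, Measure.integral_toReal_rnDeriv hηa]; simp
    have hdψ_one : ∫ x, dψ x ∂lam = 1 := by
      rw [hdψ_def, Measure.integral_toReal_rnDeriv hψ0]; simp
    set u : X → ℝ := fun x => dψ x - dη x with hu_def
    set v : X → ℝ := fun x => M x - (b + 1) with hv_def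
    have hu_int : Integrable u lam := hdψ_int.sub hdη_int
    have hv_bdd : ∀ x, |v x| ≤ 2 * C + 2 * |b| + 5 := fun x => by
      have h3 := abs_le.1 (hM_bdd x)
      have h4 := abs_le.1 (le_refl |b|)
      have hb1 := le_abs_self b
      have hb2 := neg_abs_le b
      show |M x - (b + 1)| ≤ 2 * C + 2 * |b| + 5
      rw [abs_le]
      constructor <;> [linarith [h3.1]; linarith [h3.2]]
    have huv_int : Integrable (fun x => u x * v x) lam := by
      refine Integrable.congr (hu_int.bdd_mul (c := 2 * C + 2 * |b| + 5)
        (f := fun x => M x - (b + 1))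
        ((hM_meas.sub measurable_const).aestronglyMeasurable) ?_) ?_
      · exact Filter.Eventually.of_forall fun x => by
          simpa [Real.norm_eq_abs] using hv_bdd x
      · exact Filter.Eventually.of_forall fun x => mul_comm _ _
    -- ∫ u = 0
    have hu_zero : ∫ x, u x ∂lam = 0 := by
      rw [hu_def]
      rw [integral_sub hdψ_int hdη_int, hdψ_one, hdη_one]
      ring
    -- |v| ≤ 1 a.e.
    have hv_ae : ∀ᵐ x ∂lam, |v x| ≤ 1 := by
      filter_upwards [hb_ae] with x hx
      have h1 : b ≤ M x := le_min hx (by linarith)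
      have h2 : M x ≤ b + 2 := min_le_right _ _
      show |M x - (b + 1)| ≤ 1
      rw [abs_le]
      constructor <;> linarith
    -- ∫ u v ≤ ∫ |u|
    have step1 : ∫ x, u x * v x ∂lam ≤ ∫ x, |u x| ∂lam := by
      refine integral_mono_ae huv_int hu_int.abs ?_
      filter_upwards [hv_ae] with x hx
      calc u x * v x ≤ |u x * v x| := le_abs_self _
        _ = |u x| * |v x| := abs_mul _ _
        _ ≤ |u x| * 1 := mul_le_mul_of_nonneg_left hx (abs_nonneg _)
        _ = |u x| := mul_one _
    -- ∫ |u| = tvX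
    have step2 : ∫ x, |u x| ∂lam = tvX lam η ψ0 := by
      rw [tvX]
      refine integral_congr_ae (Filter.Eventually.of_forall fun x => ?_)
      rw [hu_def]
      exact abs_sub_comm _ _
    -- ∫ u v = ∫ M dψ0 - ∫ M dη
    have hMψ : ∫ x, dψ x * M x ∂lam = ∫ x, M x ∂ψ0 := by
      have := MeasureTheory.integral_rnDeriv_smul (μ := ψ0) (ν := lam) hψ0 (f := M)
      simpa [smul_eq_mul] using this
    have hMη : ∫ x, dη x * M x ∂lam = ∫ x, M x ∂η := by
      have := MeasureTheory.integral_rnDeriv_smul (μ := η) (ν := lam) hηa (f := M)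
      simpa [smul_eq_mul] using this
    have hprod_intψ : Integrable (fun x => dψ x * M x) lam := by
      refine Integrable.congr (hdψ_int.bdd_mul (c := C + |b| + 2) (f := M)
        hM_meas.aestronglyMeasurable ?_) ?_
      · exact Filter.Eventually.of_forall fun x => by
          simpa [Real.norm_eq_abs] using hM_bdd x
      · exact Filter.Eventually.of_forall fun x => mul_comm _ _
    have hprod_intη : Integrable (fun x => dη x * M x) lam := by
      refine Integrable.congr (hdη_int.bdd_mul (c := C + |b| + 2) (f := M)
        hM_meas.aestronglyMeasurable ?_) ?_
      · exact Filter.Eventually.of_forall fun x => by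
          simpa [Real.norm_eq_abs] using hM_bdd x
      · exact Filter.Eventually.of_forall fun x => mul_comm _ _
    have step3 : ∫ x, u x * v x ∂lam = ∫ x, M x ∂ψ0 - ∫ x, M x ∂η := by
      have hexp : ∀ x, u x * v x = dψ x * M x - dη x * M x - (b + 1) * u x := by
        intro x; rw [hu_def, hv_def]; ring
      have hfg : Integrable (fun a => dψ a * M a - dη a * M a) lam := hprod_intψ.sub hprod_intη
      have hcu : Integrable (fun a => (b + 1) * u a) lam := hu_int.const_mul _
      rw [integral_congr_ae (Filter.Eventually.of_forall hexp), integral_sub hfg hcu,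
        integral_sub hprod_intψ hprod_intη, MeasureTheory.integral_const_mul, hu_zero, hMψ, hMη]
      ring
    -- combine: ∫ M dψ0 ≤ ∫ M dη + tvX
    have step4 : ∫ x, M x ∂ψ0 ≤ (∫ x, M x ∂η) + tvX lam η ψ0 := by
      have := step1
      rw [step3, step2] at this
      linarith
    -- ∫ M dη ≤ ∫ ℓ dη
    have step5 : ∫ x, M x ∂η ≤ ∫ x, ℓ x ∂η := by
      refine integral_mono (integrable_of_bdd hM_meas.aestronglyMeasurable hM_bdd)
        (integrable_of_bdd hℓ.aestronglyMeasurable hC) ?_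
      intro x
      exact min_le_left _ _
    linarith
  refine le_antisymm ?_ (le_ciInf hlow)
  -- Upper bound
  have hbdd : BddBelow (Set.range fun η : {η : Measure X // IsProbabilityMeasure η ∧ η ≪ lam} =>
      (∫ x, ℓ x ∂(η : Measure X)) + tvX lam (η : Measure X) ψ0) := by
    refine ⟨-C, ?_⟩
    rintro v ⟨⟨η, hηp, hηa⟩, rfl⟩
    haveI := hηp
    exact value_lower_bound lam ℓ hℓ hC ψ0 η
  have hupper : ∀ ε : ℝ, 0 < ε →
      (⨅ η : {η : Measure X // IsProbabilityMeasure η ∧ η ≪ lam},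
        (∫ x, ℓ x ∂(η : Measure X)) + tvX lam (η : Measure X) ψ0)
      ≤ (∫ x, M x ∂ψ0) + ε := by
    intro ε hε
    set r := b + ε with hr_def
    set A : Set X := {x | ℓ x < r} with hA_def
    have hA : MeasurableSet A := measurableSet_lt hℓ measurable_const
    have hA0 : lam A ≠ 0 := hb_pos r (by rw [hr_def]; linarith)
    have hAfin : lam A ≠ ∞ := measure_ne_top lam A
    set B : Set X := {x | ℓ x ≤ r + 2} with hB_def
    have hB : MeasurableSet B := measurableSet_le hℓ measurable_const
    set p := ψ0 Bᶜ with hp_def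
    have hp_ne : p ≠ ∞ := measure_ne_top ψ0 _
    set c := p / lam A with hc_def
    have hc_ne : c ≠ ∞ := (ENNReal.div_lt_top hp_ne hA0).ne
    have hcA : c * lam A = p := by
      rw [hc_def]; exact ENNReal.div_mul_cancel hA0 hAfin
    set η : Measure X := ψ0.restrict B + c • lam.restrict A with hη_def
    haveI hηp : IsProbabilityMeasure η := by
      constructor
      rw [hη_def, Measure.add_apply, Measure.smul_apply, Measure.restrict_apply_univ,
        Measure.restrict_apply_univ, smul_eq_mul, hcA, measure_add_measure_compl hB, measure_univ]
    have hηa : η ≪ lam := by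
      have h1 : ψ0.restrict B ≪ lam :=
        (Measure.absolutelyContinuous_of_le Measure.restrict_le_self).trans hψ0
      have h2 : (c • lam.restrict A) ≪ lam :=
        ((Measure.absolutelyContinuous_of_le Measure.restrict_le_self)).smul_left c
      rw [hη_def]
      exact Measure.AbsolutelyContinuous.add_left_iff.mpr ⟨h1, h2⟩
    -- density of η
    set h : X → ℝ≥0∞ := fun x => B.indicator (ψ0.rnDeriv lam) x + A.indicator (fun _ => c) x with hh_def
    have hh_meas : Measurable h :=
      ((Measure.measurable_rnDeriv _ _).indicator hB).add (measurable_const.indicator hA)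
    have hηd : η = lam.withDensity h := by
      have haux : lam.withDensity (B.indicator (ψ0.rnDeriv lam) + A.indicator fun _ => c)
          = ψ0.restrict B + c • lam.restrict A := by
        rw [withDensity_add_left ((Measure.measurable_rnDeriv _ _).indicator hB),
          withDensity_indicator hB, ← restrict_withDensity hB,
          show lam.withDensity (ψ0.rnDeriv lam) = ψ0 from Measure.withDensity_rnDeriv_eq _ _ hψ0,
          withDensity_indicator hA, withDensity_const]
      rw [hη_def, hh_def, ← haux]
      rfl
    have hηrn : η.rnDeriv lam =ᵐ[lam] h := by
      rw [hηd]; exact Measure.rnDeriv_withDensity lam hh_meas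
    have hrnψ_int : Integrable (fun x => (ψ0.rnDeriv lam x).toReal) lam := integrable_rnDeriv_toReal lam ψ0
    have hrnη_int : Integrable (fun x => (η.rnDeriv lam x).toReal) lam :=
      integrable_rnDeriv_toReal lam η
    have hind_eq : ∀ x : X, ((A.indicator (fun _ => c) x)).toReal
        = A.indicator (fun _ => c.toReal) x := by
      intro x; by_cases hx : x ∈ A <;> simp [hx]
    -- tvX bound
    have htv : tvX lam η ψ0 ≤ 2 * p.toReal := by
      have hbound : ∀ᵐ x ∂lam, |(η.rnDeriv lam x).toReal - (ψ0.rnDeriv lam x).toReal|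
          ≤ Bᶜ.indicator (fun x => (ψ0.rnDeriv lam x).toReal) x + A.indicator (fun _ => c.toReal) x := by
        filter_upwards [hηrn, Measure.rnDeriv_lt_top ψ0 lam] with x hx hfin
        have hiA_ne : A.indicator (fun _ => c) x ≠ ∞ := by
          by_cases hxA : x ∈ A <;> simp [hxA, hc_ne]
        rw [hx]
        show |(B.indicator (ψ0.rnDeriv lam) x + A.indicator (fun _ => c) x).toReal - (ψ0.rnDeriv lam x).toReal| ≤ _
        by_cases hxB : x ∈ B
        · rw [Set.indicator_of_mem hxB, ENNReal.toReal_add hfin.ne hiA_ne, hind_eq,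
            Set.indicator_of_notMem (show x ∉ Bᶜ by simpa using hxB)]
          have h0 : (0:ℝ) ≤ A.indicator (fun _ => c.toReal) x :=
            Set.indicator_nonneg (fun _ _ => ENNReal.toReal_nonneg) x
          have heq : (ψ0.rnDeriv lam x).toReal + A.indicator (fun _ => c.toReal) x - (ψ0.rnDeriv lam x).toReal
              = A.indicator (fun _ => c.toReal) x := by ring
          rw [heq, abs_of_nonneg h0]
          linarith
        · rw [Set.indicator_of_notMem hxB, zero_add, hind_eq,
            Set.indicator_of_mem (show x ∈ Bᶜ by simpa using hxB)]
          have h0 : (0:ℝ) ≤ A.indicator (fun _ => c.toReal) x :=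
            Set.indicator_nonneg (fun _ _ => ENNReal.toReal_nonneg) x
          have h1 : (0:ℝ) ≤ (ψ0.rnDeriv lam x).toReal := ENNReal.toReal_nonneg
          rw [abs_le]
          constructor <;> linarith
      have hint1 : Integrable (fun x => |(η.rnDeriv lam x).toReal - (ψ0.rnDeriv lam x).toReal|) lam :=
        (hrnη_int.sub hrnψ_int).abs
      have hint2a : Integrable (fun x => Bᶜ.indicator (fun x => (ψ0.rnDeriv lam x).toReal) x) lam :=
        hrnψ_int.indicator hB.compl
      have hint2b : Integrable (fun x => A.indicator (fun _ => c.toReal) x) lam :=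
        (integrable_const _).indicator hA
      calc tvX lam η ψ0
          ≤ ∫ x, (Bᶜ.indicator (fun x => (ψ0.rnDeriv lam x).toReal) x
              + A.indicator (fun _ => c.toReal) x) ∂lam :=
            integral_mono_ae hint1 (hint2a.add hint2b) hbound
        _ = (ψ0 Bᶜ).toReal + c.toReal * (lam A).toReal := by
            rw [integral_add hint2a hint2b, integral_indicator hB.compl, integral_indicator hA,
              Measure.setIntegral_toReal_rnDeriv hψ0 Bᶜ, setIntegral_const]
            simp [smul_eq_mul, mul_comm, Measure.real]
        _ = 2 * p.toReal := by
            rw [← ENNReal.toReal_mul, hcA, ← hp_def]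
            ring
    -- value of η
    haveI hsm_fin : IsFiniteMeasure (c • lam.restrict A) := by
      constructor
      rw [Measure.smul_apply, smul_eq_mul]
      exact ENNReal.mul_lt_top hc_ne.lt_top (measure_lt_top _ _)
    have hℓint1 : Integrable ℓ (ψ0.restrict B) := integrable_of_bdd hℓ.aestronglyMeasurable hC
    have hℓint2 : Integrable ℓ (c • lam.restrict A) :=
      integrable_of_bdd hℓ.aestronglyMeasurable hC
    have hℓη : ∫ x, ℓ x ∂η = (∫ x in B, ℓ x ∂ψ0) + c.toReal * ∫ x in A, ℓ x ∂lam := by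
      rw [hη_def, integral_add_measure hℓint1 hℓint2, integral_smul_measure]
      simp [smul_eq_mul]
    have hIA : ∫ x in A, ℓ x ∂lam ≤ r * (lam A).toReal := by
      have h1 : ∫ x in A, ℓ x ∂lam ≤ ∫ _x in A, r ∂lam := by
        refine setIntegral_mono_on
          (integrable_of_bdd hℓ.aestronglyMeasurable hC).integrableOn
          (integrable_const _).integrableOn hA ?_
        intro x hx
        exact le_of_lt hx
      rw [setIntegral_const] at h1
      simpa [smul_eq_mul, mul_comm, Measure.real] using h1
    have h2 : c.toReal * ∫ x in A, ℓ x ∂lam ≤ r * p.toReal := by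
      calc c.toReal * ∫ x in A, ℓ x ∂lam ≤ c.toReal * (r * (lam A).toReal) :=
            mul_le_mul_of_nonneg_left hIA ENNReal.toReal_nonneg
        _ = r * (c.toReal * (lam A).toReal) := by ring
        _ = r * p.toReal := by rw [← ENNReal.toReal_mul, hcA]
    have hmin_bdd : ∀ x, |min (ℓ x) (r + 2)| ≤ C + |r| + 2 := by
      intro x
      have h1 := hC x
      have h2 : |r + 2| ≤ |r| + 2 := by
        calc |r + 2| ≤ |r| + |(2:ℝ)| := abs_add_le r 2
          _ = |r| + 2 := by norm_num
      have hr0 := abs_nonneg r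
      rcases le_total (ℓ x) (r + 2) with hh | hh
      · rw [min_eq_left hh]; linarith
      · rw [min_eq_right hh]; linarith
    have hminint : Integrable (fun x => min (ℓ x) (r + 2)) ψ0 :=
      integrable_of_bdd (hℓ.min measurable_const).aestronglyMeasurable hmin_bdd
    have hsplit : ∫ x, min (ℓ x) (r + 2) ∂ψ0 = (∫ x in B, ℓ x ∂ψ0) + (r + 2) * p.toReal := by
      rw [← integral_add_compl hB hminint]
      congr 1
      · refine setIntegral_congr_fun hB fun x hx => ?_
        exact min_eq_left hx
      · have heqon : Set.EqOn (fun x => min (ℓ x) (r + 2)) (fun _ => r + 2) Bᶜ := by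
          intro x hx
          exact min_eq_right (le_of_lt (not_le.1 hx))
        rw [setIntegral_congr_fun hB.compl heqon, setIntegral_const]
        simp [smul_eq_mul, mul_comm, hp_def, Measure.real]
    have hvalue : (∫ x, ℓ x ∂η) + tvX lam η ψ0 ≤ ∫ x, min (ℓ x) (r + 2) ∂ψ0 := by
      rw [hℓη, hsplit]
      linarith
    have hMint : Integrable M ψ0 := integrable_of_bdd hM_meas.aestronglyMeasurable hM_bdd
    have hfinal : ∫ x, min (ℓ x) (r + 2) ∂ψ0 ≤ (∫ x, M x ∂ψ0) + ε := by
      have hptw : ∀ x, min (ℓ x) (r + 2) ≤ M x + ε := by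
        intro x
        rcases le_total (ℓ x) (b + 2) with hh | hh
        · have h3 : min (ℓ x) (r + 2) ≤ ℓ x := min_le_left _ _
          have h4 : M x = ℓ x := min_eq_left hh
          rw [h4]
          linarith
        · have h4 : M x = b + 2 := min_eq_right hh
          have h3 : min (ℓ x) (r + 2) ≤ r + 2 := min_le_right _ _
          rw [h4, hr_def] at *
          linarith
      calc ∫ x, min (ℓ x) (r + 2) ∂ψ0 ≤ ∫ x, (M x + ε) ∂ψ0 :=
            integral_mono hminint (hMint.add (integrable_const _)) hptw
        _ = (∫ x, M x ∂ψ0) + ε := by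
            rw [integral_add hMint (integrable_const _), integral_const]
            simp [measure_univ]
    refine le_trans (ciInf_le hbdd ⟨η, hηp, hηa⟩) ?_
    show (∫ x, ℓ x ∂η) + tvX lam η ψ0 ≤ (∫ x, M x ∂ψ0) + ε
    linarith
  by_contra hlt
  push_neg at hlt
  set I := (⨅ η : {η : Measure X // IsProbabilityMeasure η ∧ η ≪ lam},
      (∫ x, ℓ x ∂(η : Measure X)) + tvX lam (η : Measure X) ψ0)
  have h2 := hupper ((I - ∫ x, M x ∂ψ0) / 2) (by simpa [I] using by linarith)
  simp only [I] at h2 hlt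
  linarith



end TvalChar

section Beta
variable {X Y : Type*} [MeasurableSpace X] [MeasurableSpace Y]

noncomputable def betaFn (lam : Measure X) (l : X → Y → ℝ) (y : Y) : ℝ :=
  sSup {c : ℝ | lam {x | l x y < c} = 0}

variable {lam : Measure X} [IsProbabilityMeasure lam] {l : X → Y → ℝ} {C : ℝ}

lemma betaFn_set_nonempty (hC : ∀ x y, |l x y| ≤ C) (y : Y) :
    (-C) ∈ {c : ℝ | lam {x | l x y < c} = 0} := by
  have : {x | l x y < -C} = (∅ : Set X) := by
    ext x
    simp only [Set.mem_setOf_eq, Set.mem_empty_iff_false, iff_false, not_lt]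
    have := (abs_le.1 (hC x y)).1
    linarith
  simp [Set.mem_setOf_eq, this]

lemma betaFn_set_bddAbove (hC : ∀ x y, |l x y| ≤ C) (y : Y) :
    BddAbove {c : ℝ | lam {x | l x y < c} = 0} := by
  refine ⟨C + 1, fun c hc => ?_⟩
  by_contra hcc
  push_neg at hcc
  have huniv : {x | l x y < c} = (Set.univ : Set X) := by
    ext x
    simp only [Set.mem_setOf_eq, Set.mem_univ, iff_true]
    have := (abs_le.1 (hC x y)).2
    linarith
  rw [Set.mem_setOf_eq, huniv, measure_univ] at hc
  exact one_ne_zero hc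

lemma betaFn_bounds (hC : ∀ x y, |l x y| ≤ C) (y : Y) :
    -C ≤ betaFn lam l y ∧ betaFn lam l y ≤ C + 1 := by
  constructor
  · exact le_csSup (betaFn_set_bddAbove hC y) (betaFn_set_nonempty hC y)
  · exact csSup_le ⟨-C, betaFn_set_nonempty hC y⟩ fun c hc => by
      by_contra hcc
      push_neg at hcc
      have huniv : {x | l x y < c} = (Set.univ : Set X) := by
        ext x
        simp only [Set.mem_setOf_eq, Set.mem_univ, iff_true]
        have := (abs_le.1 (hC x y)).2
        linarith
      rw [Set.mem_setOf_eq, huniv, measure_univ] at hc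
      exact one_ne_zero hc

lemma betaFn_ae (hC : ∀ x y, |l x y| ≤ C) (y : Y) :
    ∀ᵐ x ∂lam, betaFn lam l y ≤ l x y := by
  have hnull : ∀ q : ℚ, lam {x | l x y < q ∧ (q : ℝ) < betaFn lam l y} = 0 := by
    intro q
    by_cases hq : (q : ℝ) < betaFn lam l y
    · obtain ⟨c, hcS, hqc⟩ := exists_lt_of_lt_csSup ⟨-C, betaFn_set_nonempty hC y⟩ hq
      refine measure_mono_null (fun x hx => ?_) hcS
      exact lt_trans hx.1 hqc
    · have : {x | l x y < q ∧ (q : ℝ) < betaFn lam l y} = ∅ := by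
        ext x; simp only [Set.mem_setOf_eq, Set.mem_empty_iff_false, iff_false]
        exact fun hx => hq hx.2
      simp [this]
  have hsub : {x | l x y < betaFn lam l y}
      ⊆ ⋃ q : ℚ, {x | l x y < q ∧ (q : ℝ) < betaFn lam l y} := by
    intro x hx
    simp only [Set.mem_setOf_eq] at hx
    obtain ⟨q, h1, h2⟩ := exists_rat_btwn hx
    exact Set.mem_iUnion.2 ⟨q, h1, h2⟩
  have hnull2 : lam {x | l x y < betaFn lam l y} = 0 :=
    measure_mono_null hsub (measure_iUnion_null fun q => hnull q)
  rw [ae_iff]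
  convert hnull2 using 2
  ext x
  simp [not_le]

lemma betaFn_pos (hC : ∀ x y, |l x y| ≤ C) (y : Y) :
    ∀ r, betaFn lam l y < r → lam {x | l x y < r} ≠ 0 := by
  intro r hr hnull
  have : r ∈ {c : ℝ | lam {x | l x y < c} = 0} := hnull
  exact absurd (le_csSup (betaFn_set_bddAbove hC y) this) (not_le.2 hr)

lemma betaFn_measurable (hl : Measurable fun p : X × Y => l p.1 p.2)
    (hC : ∀ x y, |l x y| ≤ C) :
    Measurable (betaFn lam l) := by
  refine measurable_of_Ioi fun t => ?_
  have heq : betaFn lam l ⁻¹' Set.Ioi t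
      = ⋃ q : ℚ, ({y | t < (q : ℝ)} ∩ {y | lam {x | l x y < q} = 0}) := by
    ext y
    simp only [Set.mem_preimage, Set.mem_Ioi, Set.mem_iUnion, Set.mem_inter_iff,
      Set.mem_setOf_eq]
    constructor
    · intro hy
      obtain ⟨c, hcS, htc⟩ := exists_lt_of_lt_csSup ⟨-C, betaFn_set_nonempty hC y⟩ hy
      obtain ⟨q, h1, h2⟩ := exists_rat_btwn htc
      refine ⟨q, h1, ?_⟩
      exact measure_mono_null (fun x hx => lt_trans hx h2) hcS
    · rintro ⟨q, h1, h2⟩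
      exact lt_of_lt_of_le h1 (le_csSup (betaFn_set_bddAbove hC y) h2)
  rw [heq]
  refine MeasurableSet.iUnion fun q => ?_
  refine MeasurableSet.inter ?_ ?_
  · by_cases h : t < (q : ℝ)
    · have : {y : Y | t < (q : ℝ)} = Set.univ := by ext y; simp [h]
      rw [this]; exact MeasurableSet.univ
    · have : {y : Y | t < (q : ℝ)} = ∅ := by ext y; simp [h]
      rw [this]; exact MeasurableSet.empty
  · have hmeas : Measurable fun y => lam ((fun x => (x, y)) ⁻¹' {p : X × Y | l p.1 p.2 < q}) :=
      measurable_measure_prodMk_right (measurableSet_lt hl measurable_const)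
    have : (fun y => lam {x | l x y < (q : ℝ)})
        = fun y => lam ((fun x => (x, y)) ⁻¹' {p : X × Y | l p.1 p.2 < q}) := rfl
    exact (by rw [show {y | lam {x | l x y < (q:ℝ)} = 0} = (fun y => lam {x | l x y < (q:ℝ)}) ⁻¹' {0} from rfl, this]; exact hmeas (measurableSet_singleton 0))


end Beta

/-- upper bound in the joint+marginal lemma via measurable selection: if
`ζ : Y → P(X)` is a measurable map with `ζ(y)` a minimizer of the parametric problem for every
`y` (i.e. `∫ l(x,y) ζ(y)(dx) + ∫ |dζ(y)/dλ − dψ(·|y)/dλ| dλ = T(y)`), then the probability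
measure `P_ζ(dx,dy) := ζ(y)(dx) m(dy)` is feasible (a probability measure, absolutely
continuous w.r.t. `λ⊗ν`, with `Y`-marginal `m`) and satisfies
`∫ l dP_ζ + ∫ |dP_ζ − dQ| ≤ ∫_Y T(y) m(dy)`; in particular `R ≤ ∫_Y T(y) m(dy)`. -/
theorem joint_marginal_upper_bound {X Y : Type*} [MeasurableSpace X] [MeasurableSpace Y]
    (lam : Measure X) (ν : Measure Y) [IsProbabilityMeasure lam] [IsProbabilityMeasure ν]
    (l : X → Y → ℝ) (hl_meas : Measurable fun p : X × Y => l p.1 p.2)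
    (hl_bdd : ∃ C : ℝ, ∀ x y, |l x y| ≤ C)
    (m : Measure Y) [IsProbabilityMeasure m]
    (Q : Measure (X × Y)) [IsProbabilityMeasure Q]
    (hQac : Q ≪ lam.prod ν) (hQm : Q.map Prod.snd = m)
    -- the disintegration `Q(dx,dy) = ψ(dx|y) m(dy)` of `Q` over its Y-marginal `m`
    (ψ : Y → Measure X) (hψ_meas : Measurable ψ)
    (hψ_prob : ∀ y, IsProbabilityMeasure (ψ y)) (hψ_ac : ∀ y, ψ y ≪ lam)
    (hdis : Q = mixJoint m ψ)
    (ζ : Y → Measure X) (hζ_meas : Measurable ζ)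
    (hζ_prob : ∀ y, IsProbabilityMeasure (ζ y)) (hζ_ac : ∀ y, ζ y ≪ lam)
    (hζ_opt : ∀ y, (∫ x, l x y ∂(ζ y)) + tvX lam (ζ y) (ψ y) = Tval lam l ψ y) :
    IsProbabilityMeasure (mixJoint m ζ)
      ∧ mixJoint m ζ ≪ lam.prod ν
      ∧ (mixJoint m ζ).map Prod.snd = m
      ∧ (∫ p, l p.1 p.2 ∂(mixJoint m ζ)) + tvJ lam ν (mixJoint m ζ) Q
          ≤ ∫ y, Tval lam l ψ y ∂m
      ∧ Rval lam ν l m Q ≤ ∫ y, Tval lam l ψ y ∂m := by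
  obtain ⟨C, hC⟩ := hl_bdd
  haveI hPprob : IsProbabilityMeasure (mixJoint m ζ) := mixJoint_prob hζ_meas hζ_prob
  have hmν : m ≪ ν := by
    rw [← hQm]
    have h1 : Q.map Prod.snd ≪ (lam.prod ν).map Prod.snd := hQac.map measurable_snd
    rwa [Measure.map_snd_prod, measure_univ, one_smul] at h1
  have hPac : mixJoint m ζ ≪ lam.prod ν := mixJoint_ac hmν hζ_meas hζ_prob hζ_ac
  have hPsnd : (mixJoint m ζ).map Prod.snd = m := mixJoint_map_snd hζ_meas hζ_prob
  -- C is nonnegative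
  have hXne : Nonempty X := by
    by_contra h
    have hempty : (Set.univ : Set X) = ∅ := by ext x; exact absurd ⟨x⟩ h
    have h1 : lam Set.univ = 1 := measure_univ
    rw [hempty] at h1; simp at h1
  have hYne : Nonempty Y := by
    by_contra h
    have hempty : (Set.univ : Set Y) = ∅ := by ext y; exact absurd ⟨y⟩ h
    have h1 : m Set.univ = 1 := measure_univ
    rw [hempty] at h1; simp at h1
  have hC0 : 0 ≤ C := le_trans (abs_nonneg _) (hC hXne.some hYne.some)
  -- the closed form of Tval
  have hTval : ∀ y, Tval lam l ψ y = ∫ x, min (l x y) (betaFn lam l y + 2) ∂(ψ y) := by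
    intro y
    haveI := hψ_prob y
    have hℓmeas : Measurable fun x => l x y := hl_meas.comp measurable_prodMk_right
    rw [Tval]
    exact iInf_value_eq lam (fun x => l x y) hℓmeas (fun x => hC x y) (ψ y) (hψ_ac y)
      (betaFn_ae hC y) (betaFn_pos hC y)
  have hβmeas : Measurable (betaFn lam l) := betaFn_measurable hl_meas hC
  have hβbd : ∀ y, |betaFn lam l y| ≤ C + 1 := by
    intro y
    have h1 := betaFn_bounds (lam := lam) hC y
    rw [abs_le]
    exact ⟨by linarith [h1.1], h1.2⟩
  -- F and intl
  set F : Y → ℝ := fun y => ∫ x, min (l x y) (betaFn lam l y + 2) ∂(ψ y) with hF_def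
  set intl : Y → ℝ := fun y => ∫ x, l x y ∂(ζ y) with hintl_def
  haveI hψK := famKernel_markov hψ_meas hψ_prob
  haveI hζK := famKernel_markov hζ_meas hζ_prob
  have hGmeas : Measurable fun p : X × Y => min (l p.1 p.2) (betaFn lam l p.2 + 2) :=
    hl_meas.min ((hβmeas.comp measurable_snd).add_const 2)
  have hGbd : ∀ p : X × Y, |min (l p.1 p.2) (betaFn lam l p.2 + 2)| ≤ 2 * C + 3 := by
    intro p
    have h1 := hC p.1 p.2
    have h2 := hβbd p.2
    have h3 := abs_le.1 h2
    rcases le_total (l p.1 p.2) (betaFn lam l p.2 + 2) with h | h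
    · rw [min_eq_left h]
      have := abs_le.1 h1
      rw [abs_le]; constructor <;> linarith
    · rw [min_eq_right h]
      rw [abs_le]; constructor <;> linarith
  have hFmeas : Measurable F := by
    have h1 := MeasureTheory.StronglyMeasurable.integral_kernel_prod_left'
      (κ := famKernel ψ hψ_meas) hGmeas.stronglyMeasurable
    exact h1.measurable
  have hintlmeas : Measurable intl := by
    have h1 := MeasureTheory.StronglyMeasurable.integral_kernel_prod_left'
      (κ := famKernel ζ hζ_meas) hl_meas.stronglyMeasurable
    exact h1.measurable
  have hFbd : ∀ y, |F y| ≤ 2 * C + 3 := by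
    intro y
    haveI := hψ_prob y
    rw [hF_def]
    calc |∫ x, min (l x y) (betaFn lam l y + 2) ∂(ψ y)|
        ≤ ∫ x, |min (l x y) (betaFn lam l y + 2)| ∂(ψ y) := abs_integral_le_integral_abs_aux
      _ ≤ ∫ _x, (2 * C + 3) ∂(ψ y) := by
          refine integral_mono ?_ (integrable_const _) (fun x => hGbd (x, y))
          exact (integrable_of_bdd (μ := ψ y)
            ((hl_meas.comp measurable_prodMk_right).min measurable_const).aestronglyMeasurable
            (fun x => hGbd (x, y))).abs
      _ = 2 * C + 3 := by simp [measure_univ]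
  have hintlbd : ∀ y, |intl y| ≤ C := by
    intro y
    haveI := hζ_prob y
    rw [hintl_def]
    calc |∫ x, l x y ∂(ζ y)| ≤ ∫ x, |l x y| ∂(ζ y) := abs_integral_le_integral_abs_aux
      _ ≤ ∫ _x, C ∂(ζ y) := by
          refine integral_mono ?_ (integrable_const _) (fun x => hC x y)
          exact (integrable_of_bdd (μ := ζ y)
            (hl_meas.comp measurable_prodMk_right).aestronglyMeasurable
            (fun x => hC x y)).abs
      _ = C := by simp [measure_univ]
  have hFint : Integrable F m := integrable_of_bdd hFmeas.aestronglyMeasurable hFbd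
  have hintlint : Integrable intl m := integrable_of_bdd hintlmeas.aestronglyMeasurable hintlbd
  -- pointwise identity for tvX
  have htvXid : ∀ y, tvX lam (ζ y) (ψ y) = F y - intl y := by
    intro y
    have h1 := hζ_opt y
    have h2 := hTval y
    rw [hF_def, hintl_def]
    simp only   -- beta reduce
    linarith
  have hGpos : ∀ y, 0 ≤ F y - intl y := fun y => (htvXid y) ▸ tvX_nonneg lam (ζ y) (ψ y)
  -- the integral of l against mixJoint m ζ
  have hIl : ∫ p, l p.1 p.2 ∂(mixJoint m ζ) = ∫ y, intl y ∂m :=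
    mixJoint_integral hζ_meas hζ_prob hl_meas (fun p => hC p.1 p.2)
  -- tvJ bound
  have hfPmeas := Measure.measurable_rnDeriv (mixJoint m ζ) (lam.prod ν)
  have hfQmeas := Measure.measurable_rnDeriv Q (lam.prod ν)
  set D := ∫⁻ p, ((mixJoint m ζ).rnDeriv (lam.prod ν) p - Q.rnDeriv (lam.prod ν) p)
    ∂(lam.prod ν) with hD_def
  have htvJ : tvJ lam ν (mixJoint m ζ) Q = 2 * D.toReal := by
    rw [tvJ, hD_def]
    exact tv_formula hPac hQac
  set s : Set (X × Y) :=
    {p | Q.rnDeriv (lam.prod ν) p < (mixJoint m ζ).rnDeriv (lam.prod ν) p} with hs_def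
  have hs : MeasurableSet s := measurableSet_lt hfQmeas hfPmeas
  have hD1 : D = ∫⁻ p in s, ((mixJoint m ζ).rnDeriv (lam.prod ν) p
      - Q.rnDeriv (lam.prod ν) p) ∂(lam.prod ν) := by
    rw [hD_def, ← lintegral_indicator hs]
    refine lintegral_congr fun p => ?_
    by_cases hp : p ∈ s
    · rw [Set.indicator_of_mem hp]
    · rw [Set.indicator_of_notMem hp]
      have : (mixJoint m ζ).rnDeriv (lam.prod ν) p ≤ Q.rnDeriv (lam.prod ν) p := by
        have := hp
        rw [hs_def] at this
        simpa [not_lt] using this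
      exact tsub_eq_zero_of_le this
  have hQs_ne : ∫⁻ p in s, Q.rnDeriv (lam.prod ν) p ∂(lam.prod ν) ≠ ∞ := by
    rw [Measure.setLIntegral_rnDeriv hQac s]
    exact measure_ne_top Q s
  have hD2 : D = mixJoint m ζ s - Q s := by
    rw [hD1, lintegral_sub hfQmeas hQs_ne ?hle, Measure.setLIntegral_rnDeriv hPac s,
      Measure.setLIntegral_rnDeriv hQac s]
    case hle =>
      refine (ae_restrict_iff' hs).2 (Filter.Eventually.of_forall fun p hp => ?_)
      exact le_of_lt hp
  have hD3 : D ≤ ∫⁻ y, (ζ y ((fun x => (x, y)) ⁻¹' s) - ψ y ((fun x => (x, y)) ⁻¹' s)) ∂m := by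
    rw [hD2, mixJoint_apply hζ_meas hζ_prob hs, hdis, mixJoint_apply hψ_meas hψ_prob hs]
    exact lintegral_sub_le' _ _
      (Kernel.measurable_kernel_prodMk_right (κ := famKernel ψ hψ_meas) hs).aemeasurable
  have hD4 : ∀ y, ζ y ((fun x => (x, y)) ⁻¹' s) - ψ y ((fun x => (x, y)) ⁻¹' s)
      ≤ ENNReal.ofReal ((F y - intl y) / 2) := by
    intro y
    haveI := hζ_prob y
    haveI := hψ_prob y
    set Dy := ∫⁻ x, ((ζ y).rnDeriv lam x - (ψ y).rnDeriv lam x) ∂lam with hDy_def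
    have h5 := meas_le_add_lintegral (hζ_ac y) (hψ_ac y) ((fun x => (x, y)) ⁻¹' s)
    have h6 : ζ y ((fun x => (x, y)) ⁻¹' s) - ψ y ((fun x => (x, y)) ⁻¹' s) ≤ Dy := by
      rw [tsub_le_iff_right]
      rw [add_comm]
      exact h5
    have hDy_le : Dy ≤ 1 := lintegral_rnDeriv_sub_le_one (hζ_ac y)
    have hDy_ne : Dy ≠ ∞ := ne_of_lt (lt_of_le_of_lt hDy_le (by norm_num))
    have htvy : tvX lam (ζ y) (ψ y) = 2 * Dy.toReal := by
      rw [tvX, hDy_def]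
      exact tv_formula (hζ_ac y) (hψ_ac y)
    have heq : ENNReal.ofReal ((F y - intl y) / 2) = Dy := by
      have h7 : F y - intl y = 2 * Dy.toReal := by rw [← htvXid y, htvy]
      rw [h7]
      have : 2 * Dy.toReal / 2 = Dy.toReal := by ring
      rw [this, ENNReal.ofReal_toReal hDy_ne]
    rw [heq]
    exact h6
  have hghalf_int : Integrable (fun y => (F y - intl y) / 2) m := (hFint.sub hintlint).div_const 2
  have hD5 : D ≤ ENNReal.ofReal (∫ y, (F y - intl y) / 2 ∂m) := by
    rw [MeasureTheory.ofReal_integral_eq_lintegral_ofReal hghalf_int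
      (Filter.Eventually.of_forall fun y => by
        have := hGpos y; positivity)]
    exact le_trans hD3 (lintegral_mono fun y => hD4 y)
  have hD6 : D.toReal ≤ ∫ y, (F y - intl y) / 2 ∂m := by
    refine ENNReal.toReal_le_of_le_ofReal ?_ hD5
    exact integral_nonneg fun y => by have := hGpos y; positivity
  have htvJ_le : tvJ lam ν (mixJoint m ζ) Q ≤ ∫ y, (F y - intl y) ∂m := by
    rw [htvJ]
    have h8 : ∫ y, (F y - intl y) / 2 ∂m = (∫ y, (F y - intl y) ∂m) / 2 := integral_div 2 _
    linarith [hD6, h8.symm ▸ hD6]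
  -- main inequality
  have hmain : (∫ p, l p.1 p.2 ∂(mixJoint m ζ)) + tvJ lam ν (mixJoint m ζ) Q
      ≤ ∫ y, Tval lam l ψ y ∂m := by
    have h9 : ∫ y, Tval lam l ψ y ∂m = ∫ y, F y ∂m :=
      integral_congr_ae (Filter.Eventually.of_forall fun y => hTval y)
    have h10 : ∫ y, (F y - intl y) ∂m = ∫ y, F y ∂m - ∫ y, intl y ∂m :=
      integral_sub hFint hintlint
    rw [h9, hIl]
    linarith [htvJ_le, h10 ▸ htvJ_le]
  refine ⟨hPprob, hPac, hPsnd, hmain, ?_⟩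
  -- Rval bound
  have hRbdd : BddBelow (Set.range fun P : {P : Measure (X × Y) //
      IsProbabilityMeasure P ∧ P ≪ lam.prod ν ∧ P.map Prod.snd = m} =>
      (∫ p, l p.1 p.2 ∂(P : Measure (X × Y))) + tvJ lam ν (P : Measure (X × Y)) Q) := by
    refine ⟨-C, ?_⟩
    rintro v ⟨⟨P, hP1, hP2, hP3⟩, rfl⟩
    haveI := hP1
    have h1 : -C ≤ ∫ p, l p.1 p.2 ∂P := by
      have h2 : ∫ _p, (-C : ℝ) ∂P ≤ ∫ p, l p.1 p.2 ∂P := by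
        refine integral_mono (integrable_const _)
          (integrable_of_bdd hl_meas.aestronglyMeasurable fun p => hC p.1 p.2) ?_
        intro p
        have := (abs_le.1 (hC p.1 p.2)).1
        show -C ≤ l p.1 p.2
        linarith
      simpa [measure_univ] using h2
    have h2 : 0 ≤ tvJ lam ν P Q := integral_nonneg fun p => abs_nonneg _
    show -C ≤ (∫ p, l p.1 p.2 ∂P) + tvJ lam ν P Q
    linarith
  have hle := ciInf_le hRbdd (⟨mixJoint m ζ, hPprob, hPac, hPsnd⟩ :
    {P : Measure (X × Y) // IsProbabilityMeasure P ∧ P ≪ lam.prod ν ∧ P.map Prod.snd = m})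
  rw [Rval]
  exact le_trans hle hmain


end DIMG
end
end
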